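/- arXiv:1405.3626 — 4 statements merged into one kernel-verified Lean document; each statement's English description precedes it below -/
import Mathlib

section
/- Let N be a positive integer that cannot be written as a^2 + b^2 with a, b nonnegative integers. Then the number of (3,1)-singular overpartitions of N satisfies C̄_{3,1}(N) ≡ 0 (mod 3). -/
open PowerSeries Finset

abbrev S31 : Type := PowerSeries (ZMod 3)

namespace C31aux

noncomputable def qq : S31 := PowerSeries.X

/-- Equality of coefficients up to index `N`. -/
def EqN (N : ℕ) (f g : S31) : Prop := ∀ n ≤ N, coeff n f = coeff n g

theorem EqN.refl (N : ℕ) (f : S31) : EqN N f f := fun _ _ => rfl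

theorem EqN.symm {N f g} (h : EqN N f g) : EqN N g f := fun n hn => (h n hn).symm

theorem EqN.trans {N f g h'} (h1 : EqN N f g) (h2 : EqN N g h') : EqN N f h' :=
  fun n hn => (h1 n hn).trans (h2 n hn)

theorem EqN.mul_right {N f g} (h : EqN N f g) (k : S31) : EqN N (f * k) (g * k) := by
  intro n hn
  rw [coeff_mul, coeff_mul]
  refine Finset.sum_congr rfl fun p hp => ?_
  rw [Finset.HasAntidiagonal.mem_antidiagonal] at hp
  rw [h p.1 (le_trans (by omega) hn)]

theorem EqN.mul_left {N f g} (h : EqN N f g) (k : S31) : EqN N (k * f) (k * g) := by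
  have := h.mul_right k
  simpa [mul_comm] using this

theorem EqN.mul {N f g f' g'} (h : EqN N f g) (h' : EqN N f' g') :
    EqN N (f * f') (g * g') := (h.mul_right f').trans (h'.mul_left g)

theorem EqN.pow {N f g} (h : EqN N f g) (k : ℕ) : EqN N (f ^ k) (g ^ k) := by
  induction k with
  | zero => simpa using EqN.refl N 1
  | succ k ih => rw [pow_succ, pow_succ]; exact ih.mul h

theorem EqN.sum {N} {ι : Type} (s : Finset ι) (F G : ι → S31)
    (h : ∀ i ∈ s, EqN N (F i) (G i)) : EqN N (∑ i ∈ s, F i) (∑ i ∈ s, G i) := by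
  intro n hn
  rw [map_sum, map_sum]
  exact Finset.sum_congr rfl fun i hi => h i hi n hn

theorem EqN.prod {N} {ι : Type} (s : Finset ι) (F G : ι → S31)
    (h : ∀ i ∈ s, EqN N (F i) (G i)) : EqN N (∏ i ∈ s, F i) (∏ i ∈ s, G i) := by
  classical
  induction s using Finset.cons_induction with
  | empty => simpa using EqN.refl N 1
  | cons a s ha ih =>
      rw [Finset.prod_cons, Finset.prod_cons]
      exact (h a (Finset.mem_cons_self a s)).mul
        (ih fun i hi => h i (Finset.mem_cons_of_mem hi))

theorem EqN_Xpow_mul {N k : ℕ} (hk : N < k) (f : S31) : EqN N (qq ^ k * f) 0 := by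
  intro n hn
  rw [coeff_mul]
  rw [map_zero]
  refine Finset.sum_eq_zero fun p hp => ?_
  rw [Finset.HasAntidiagonal.mem_antidiagonal] at hp
  rw [qq, coeff_X_pow, if_neg (by omega), zero_mul]

theorem EqN_Xpow {N k : ℕ} (hk : N < k) : EqN N (qq ^ k) 0 := by
  simpa using EqN_Xpow_mul hk 1

theorem EqN_one_sub {N k : ℕ} (hk : N < k) : EqN N (1 - qq ^ k) 1 := by
  intro n hn
  rw [map_sub]
  rw [EqN_Xpow hk n hn, map_zero, sub_zero]

theorem EqN_one_add {N k : ℕ} (hk : N < k) : EqN N (1 + qq ^ k) 1 := by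
  intro n hn
  rw [map_add]
  rw [EqN_Xpow hk n hn, map_zero, add_zero]

theorem EqN_cancel {N : ℕ} {f g v : S31} (hv : constantCoeff v ≠ 0)
    (h : EqN N (f * v) (g * v)) : EqN N f g := by
  have hv1 : v * v⁻¹ = 1 := PowerSeries.mul_inv_cancel _ hv
  have := h.mul_right v⁻¹
  rw [mul_assoc, mul_assoc, hv1, mul_one, mul_one] at this
  exact this

/-- Gaussian binomial coefficient with base `X^2`, as a power series. -/
noncomputable def B : ℕ → ℕ → S31
  | _, 0 => 1
  | 0, _ + 1 => 0
  | n + 1, k + 1 => B n (k + 1) * qq ^ (2 * (k + 1)) + B n k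

@[simp] theorem B_zero_right (n : ℕ) : B n 0 = 1 := by cases n <;> rfl

@[simp] theorem B_zero_succ (k : ℕ) : B 0 (k + 1) = 0 := rfl

theorem B_succ_succ (n k : ℕ) :
    B (n + 1) (k + 1) = B n (k + 1) * qq ^ (2 * (k + 1)) + B n k := rfl

theorem B_eq_zero : ∀ {n k : ℕ}, n < k → B n k = 0 := by
  intro n
  induction n with
  | zero => intro k hk; match k, hk with | k + 1, _ => rfl
  | succ n ih =>
      intro k hk
      match k, hk with
      | k + 1, hk =>
        rw [B_succ_succ, ih (by omega), ih (by omega), zero_mul, zero_add]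

@[simp] theorem B_diag (n : ℕ) : B n n = 1 := by
  induction n with
  | zero => rfl
  | succ n ih => rw [B_succ_succ, B_eq_zero (by omega), zero_mul, zero_add, ih]

theorem B_one (n : ℕ) : B n 1 * qq ^ 2 + 1 = B n 1 + qq ^ (2 * n) := by
  induction n with
  | zero => simp
  | succ n ih =>
      rw [show B (n + 1) 1 = B n 1 * qq ^ (2 * 1) + 1 by
            rw [B_succ_succ, B_zero_right]]
      rw [show 2 * (n + 1) = 2 * n + 2 by ring, pow_add, show (2 : ℕ) * 1 = 2 by rfl]
      linear_combination qq ^ 2 * ih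

/-- Second Pascal identity. -/
theorem B_pascal2 (n : ℕ) : ∀ k : ℕ,
    B (n + 1) (k + 1) = B n (k + 1) + qq ^ (2 * (n - k)) * B n k := by
  induction n with
  | zero =>
      intro k
      cases k with
      | zero => simp [B_succ_succ]
      | succ k => simp [B_succ_succ, B_eq_zero (show k + 1 < k + 2 by omega)]
  | succ n ih =>
      intro k
      cases k with
      | zero =>
          rw [B_succ_succ, B_zero_right, mul_one, Nat.sub_zero]
          have := B_one (n + 1)
          rw [show (2 : ℕ) = 2 * 1 by rfl] at this
          rw [this]
      | succ k =>
          calc B (n + 2) (k + 2)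
              = B (n + 1) (k + 2) * qq ^ (2 * (k + 2)) + B (n + 1) (k + 1) :=
                B_succ_succ _ _
            _ = (B n (k + 2) + qq ^ (2 * (n - (k + 1))) * B n (k + 1)) * qq ^ (2 * (k + 2))
                  + (B n (k + 1) + qq ^ (2 * (n - k)) * B n k) := by
                rw [← ih (k + 1), ← ih k]
            _ = (B n (k + 2) * qq ^ (2 * (k + 2)) + B n (k + 1))
                  + qq ^ (2 * (n - k)) * (B n (k + 1) * qq ^ (2 * (k + 1)) + B n k) := by
                rcases le_or_gt (k + 1) n with hkn | hkn
                · have hx : qq ^ (2 * (n - (k + 1))) * qq ^ (2 * (k + 2)) =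
                      qq ^ (2 * (n - k)) * qq ^ (2 * (k + 1)) := by
                    rw [← pow_add, ← pow_add]; congr 1; omega
                  linear_combination B n (k + 1) * hx
                · rw [B_eq_zero (show n < k + 1 by omega)]; ring
            _ = B n (k + 2) * qq ^ (2 * (k + 2)) + B n (k + 1)
                  + qq ^ (2 * (n + 1 - (k + 1))) * B (n + 1) (k + 1) := by
                rw [B_succ_succ n k, Nat.succ_sub_succ]
            _ = B (n + 1) (k + 2) + qq ^ (2 * (n + 1 - (k + 1))) * B (n + 1) (k + 1) := by
                rw [B_succ_succ n (k + 1)]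

/-- `Dq m = ∏_{t=1}^{m} (1 - X^{2t})`. -/
noncomputable def Dq (m : ℕ) : S31 := ∏ t ∈ Finset.range m, (1 - qq ^ (2 * (t + 1)))

@[simp] theorem Dq_zero : Dq 0 = 1 := by simp [Dq]

theorem Dq_succ (m : ℕ) : Dq (m + 1) = Dq m * (1 - qq ^ (2 * (m + 1))) :=
  Finset.prod_range_succ _ _

/-- Product formula for the Gaussian binomial. -/
theorem B_mul_Dq : ∀ n k : ℕ, k ≤ n → B n k * Dq k * Dq (n - k) = Dq n := by
  intro n
  induction n with
  | zero => intro k hk; interval_cases k; simp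
  | succ n ih =>
      intro k hk
      cases k with
      | zero => simp
      | succ k =>
          rcases eq_or_lt_of_le hk with hk' | hk'
          · rw [hk'.symm] at *
            simp
          · have hkn : k + 1 ≤ n := by omega
            have hkn' : k ≤ n := by omega
            rw [B_succ_succ]
            have e1 : n + 1 - (k + 1) = (n - (k + 1)) + 1 := by omega
            have e2 : n - k = (n - (k + 1)) + 1 := by omega
            rw [e1, Dq_succ (n - (k + 1)), Dq_succ k, Dq_succ n]
            have h1 := ih (k + 1) hkn
            have h2 := ih k hkn'
            rw [Dq_succ k] at h1
            rw [e2, Dq_succ (n - (k + 1))] at h2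
            have hx : qq ^ (2 * (k + 1)) * qq ^ (2 * (n - (k + 1) + 1)) = qq ^ (2 * (n + 1)) := by
              rw [← pow_add]; congr 1; omega
            linear_combination qq ^ (2 * (k + 1)) * (1 - qq ^ (2 * (n - (k + 1) + 1))) * h1
              + (1 - qq ^ (2 * (k + 1))) * h2 - Dq n * hx

/-- `dl i b = (i-b)^2` as naturals. -/
def dl (i b : ℕ) : ℕ := (i - b) ^ 2 + (b - i) ^ 2

@[simp] theorem dl_zero_right (i : ℕ) : dl i 0 = i ^ 2 := by simp [dl]

@[simp] theorem dl_zero_left (b : ℕ) : dl 0 b = b ^ 2 := by simp [dl]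

theorem dl_succ_succ (i b : ℕ) : dl (i + 1) (b + 1) = dl i b := by
  simp [dl, Nat.succ_sub_succ]

theorem dl_sq (i b : ℕ) : dl i b = ((i - b) + (b - i)) ^ 2 := by
  rcases le_total i b with h | h
  · simp [dl, Nat.sub_eq_zero_of_le h]
  · simp [dl, Nat.sub_eq_zero_of_le h]

theorem dl_step1 (j b : ℕ) : dl j b + 2 * (j + 1) = 2 * b + 1 + dl (j + 1) b := by
  rcases le_total b j with h | h
  · have h1 : b ≤ j + 1 := by omega
    simp only [dl, Nat.sub_eq_zero_of_le h, Nat.sub_eq_zero_of_le h1]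
    zify [h, h1]
    ring
  · rcases eq_or_lt_of_le h with h' | h'
    · subst h'; simp [dl]; omega
    · have h1 : j + 1 ≤ b := by omega
      simp only [dl, Nat.sub_eq_zero_of_le h, Nat.sub_eq_zero_of_le h1]
      zify [h, h1]
      ring

theorem sq_step (j a : ℕ) (hj : j ≤ a) :
    (j + 1) ^ 2 + 2 * (a - j) = 2 * a + 1 + j ^ 2 := by
  zify [hj]; ring

open Polynomial in
/-- left side of the finite Jacobi triple product. -/
noncomputable def Ep (a b : ℕ) : Polynomial S31 :=
  (∏ k ∈ Finset.range a, (1 + Polynomial.C (qq ^ (2 * k + 1)) * Polynomial.X)) *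
    ∏ k ∈ Finset.range b, (Polynomial.X + Polynomial.C (qq ^ (2 * k + 1)))

/-- right side of the finite Jacobi triple product. -/
noncomputable def Rh (n b : ℕ) : Polynomial S31 :=
  ∑ i ∈ Finset.range (n + 1), Polynomial.C (qq ^ dl i b * B n i) * Polynomial.X ^ i

theorem coeff_Rh (n b j : ℕ) : (Rh n b).coeff j = qq ^ dl j b * B n j := by
  rw [Rh, Polynomial.finset_sum_coeff]
  simp only [Polynomial.coeff_C_mul, Polynomial.coeff_X_pow, mul_ite, mul_one, mul_zero]
  rw [Finset.sum_ite_eq (Finset.range (n + 1)) j]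
  split
  · rfl
  · rw [B_eq_zero (by simp at *; omega), mul_zero]

theorem jtp_a (a : ℕ) : Ep a 0 = Rh a 0 := by
  induction a with
  | zero => simp [Ep, Rh]
  | succ a ih =>
      have hstep : Ep (a + 1) 0 = Ep a 0 * (1 + Polynomial.C (qq ^ (2 * a + 1)) * Polynomial.X) := by
        rw [Ep, Ep, Finset.prod_range_succ]
        ring
      rw [hstep, ih]
      refine Polynomial.ext fun j => ?_
      rw [coeff_Rh, mul_add, Polynomial.coeff_add, mul_one]
      cases j with
      | zero =>
          rw [show Rh a 0 * (Polynomial.C (qq ^ (2 * a + 1)) * Polynomial.X) =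
              Rh a 0 * Polynomial.C (qq ^ (2 * a + 1)) * Polynomial.X by ring,
            Polynomial.mul_coeff_zero]
          simp [coeff_Rh]
      | succ j =>
          rw [show Rh a 0 * (Polynomial.C (qq ^ (2 * a + 1)) * Polynomial.X) =
              (Rh a 0 * Polynomial.C (qq ^ (2 * a + 1))) * Polynomial.X by ring,
            Polynomial.coeff_mul_X, Polynomial.coeff_mul_C, coeff_Rh, coeff_Rh,
            dl_zero_right, dl_zero_right, B_pascal2]
          rcases le_or_gt j a with hja | hja
          · have hx : (qq : S31) ^ ((j+1)^2) * qq ^ (2 * (a - j)) = qq ^ (2*a+1) * qq ^ (j^2) := by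
              rw [← pow_add, ← pow_add, sq_step j a hja]
            linear_combination (-(B a j)) * hx
          · rw [B_eq_zero hja]
            ring

theorem jtp (b a : ℕ) : Ep a b = Rh (a + b) b := by
  induction b with
  | zero => simpa using jtp_a a
  | succ b ih =>
      have hstep : Ep a (b + 1) = Ep a b * (Polynomial.X + Polynomial.C (qq ^ (2 * b + 1))) := by
        rw [Ep, Ep, Finset.prod_range_succ]
        ring
      rw [hstep, ih]
      refine Polynomial.ext fun j => ?_
      rw [coeff_Rh, mul_add, Polynomial.coeff_add, Polynomial.coeff_mul_C, coeff_Rh]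
      cases j with
      | zero =>
          rw [Polynomial.mul_coeff_zero]
          simp only [Polynomial.coeff_X_zero, mul_zero, zero_add, coeff_Rh, dl_zero_left,
            B_zero_right, mul_one, show a + (b+1) = (a+b)+1 by ring]
          rw [← pow_add]
          congr 1
          ring
      | succ j =>
          rw [Polynomial.coeff_mul_X, coeff_Rh, dl_succ_succ,
            show a + (b + 1) = (a + b) + 1 by ring, B_succ_succ]
          have hx : (qq : S31) ^ (dl j b) * qq ^ (2 * (j + 1)) =
              qq ^ (2 * b + 1) * qq ^ (dl (j+1) b) := by
            rw [← pow_add, ← pow_add, dl_step1]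
          linear_combination (-(B (a + b) (j + 1))) * hx

/-- `Gg M = ∏_{k=1}^{M} (1 - X^{2k-1})`. -/
noncomputable def Gg (M : ℕ) : S31 := ∏ k ∈ Finset.range M, (1 - qq ^ (2 * k + 1))

theorem Gsq (M : ℕ) :
    Gg M ^ 2 = ∑ i ∈ Finset.range (2 * M + 1),
      (-1 : S31) ^ (M + i) * qq ^ dl i M * B (2 * M) i := by
  have he := congrArg (Polynomial.eval (-1 : S31)) (jtp M M)
  rw [Ep, Rh] at he
  simp only [Polynomial.eval_mul, Polynomial.eval_prod, Polynomial.eval_add, Polynomial.eval_one,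
    Polynomial.eval_C, Polynomial.eval_X, Polynomial.eval_pow, Polynomial.eval_finset_sum,
    Polynomial.eval_neg] at he
  rw [show M + M = 2 * M by ring] at he
  have h1 : (∏ k ∈ Finset.range M, (1 + qq ^ (2 * k + 1) * (-1))) = Gg M :=
    Finset.prod_congr rfl fun k _ => by ring
  have h2 : (∏ k ∈ Finset.range M, ((-1 : S31) + qq ^ (2 * k + 1))) = (-1) ^ M * Gg M := by
    rw [Gg, show ((-1 : S31)) ^ M = ∏ _k ∈ Finset.range M, (-1 : S31) by
      rw [Finset.prod_const, Finset.card_range], ← Finset.prod_mul_distrib]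
    exact Finset.prod_congr rfl fun k _ => by ring
  rw [h1, h2] at he
  have hm : (-1 : S31) ^ M * (-1) ^ M = 1 := by
    rw [← pow_add]
    exact Even.neg_one_pow ⟨M, rfl⟩
  have := congrArg (fun z => (-1 : S31) ^ M * z) he
  rw [Finset.mul_sum] at this
  calc Gg M ^ 2 = (-1 : S31) ^ M * (Gg M * ((-1) ^ M * Gg M)) := by
        rw [show (-1 : S31) ^ M * (Gg M * ((-1) ^ M * Gg M)) =
          ((-1 : S31) ^ M * (-1) ^ M) * (Gg M * Gg M) by ring, hm, one_mul, sq]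
    _ = ∑ i ∈ Finset.range (2 * M + 1), (-1 : S31) ^ (M + i) * qq ^ dl i M * B (2 * M) i := by
        rw [this]
        exact Finset.sum_congr rfl fun i _ => by rw [pow_add]; ring

@[simp] theorem cc_qq : constantCoeff qq = 0 := PowerSeries.constantCoeff_X

theorem cc_one_sub (k : ℕ) (hk : k ≠ 0) : constantCoeff (1 - qq ^ k) = 1 := by
  rw [map_sub, map_one, map_pow, cc_qq, zero_pow hk, sub_zero]

theorem cc_one_add (k : ℕ) (hk : k ≠ 0) : constantCoeff (1 + qq ^ k) = 1 := by
  rw [map_add, map_one, map_pow, cc_qq, zero_pow hk, add_zero]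

theorem EqN_prod_extend {n : ℕ} (g : ℕ → S31) (a b : ℕ) (hab : a ≤ b)
    (hg : ∀ k, a ≤ k → EqN n (g k) 1) :
    EqN n (∏ k ∈ Finset.range b, g k) (∏ k ∈ Finset.range a, g k) := by
  rw [show b = a + (b - a) by omega, Finset.prod_range_add]
  have h1 : EqN n (∏ x ∈ Finset.range (b - a), g (a + x)) 1 := by
    have := EqN.prod (Finset.range (b - a)) (fun x => g (a + x)) (fun _ => 1)
      (fun i _ => hg _ (by omega))
    simpa using this
  have := (EqN.refl n (∏ k ∈ Finset.range a, g k)).mul h1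
  rw [mul_one] at this
  exact this

theorem Dq_approx {n : ℕ} (a b : ℕ) (hab : a ≤ b) (ha : n + 1 ≤ 2 * (a + 1)) :
    EqN n (Dq b) (Dq a) :=
  EqN_prod_extend _ a b hab fun k hk => EqN_one_sub (by omega)

@[simp] theorem cc_Dq (m : ℕ) : constantCoeff (Dq m) = 1 := by
  rw [Dq, map_prod]
  rw [Finset.prod_congr rfl fun t _ => cc_one_sub _ (by omega)]
  simp

/-- `two_s` : `2 * sqrt N ≤ N + 1`. -/
theorem two_sqrt_le (N : ℕ) : 2 * Nat.sqrt N ≤ N + 1 := by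
  have h := Nat.sqrt_le' N
  rcases Nat.eq_zero_or_pos (Nat.sqrt N) with h0 | h0
  · omega
  · nlinarith

theorem BDq {N : ℕ} (M : ℕ) (hM : M = N + 1) (i : ℕ) (hi : i ≤ 2 * M)
    (hd : dl i M ≤ N) : EqN N (B (2 * M) i * Dq M) 1 := by
  set s := Nat.sqrt N with hs
  have h2s : 2 * s ≤ N + 1 := two_sqrt_le N
  have hbound : (i - M) + (M - i) ≤ s := by
    rw [hs, Nat.le_sqrt]
    calc ((i-M) + (M-i)) * ((i-M) + (M-i)) = ((i-M) + (M-i)) ^ 2 := (sq _).symm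
      _ = dl i M := (dl_sq i M).symm
      _ ≤ N := hd
  have hiM : M ≤ i + s := by omega
  have hMi : i ≤ M + s := by omega
  apply EqN_cancel (v := Dq i * Dq (2 * M - i)) (by rw [map_mul, cc_Dq, cc_Dq]; norm_num)
  have hrw : B (2 * M) i * Dq M * (Dq i * Dq (2 * M - i)) =
      (B (2 * M) i * Dq i * Dq (2 * M - i)) * Dq M := by ring
  rw [hrw, B_mul_Dq (2 * M) i hi, one_mul]
  have sub1 : EqN N (Dq (2 * M)) (Dq i) := Dq_approx i (2 * M) hi (by omega)
  have sub2 : EqN N (Dq M) (Dq (2 * M - i)) := by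
    rcases le_total (2 * M - i) M with hc | hc
    · exact Dq_approx (2 * M - i) M hc (by omega)
    · exact (Dq_approx M (2 * M - i) hc (by omega)).symm
  exact sub1.mul sub2

theorem three_eq_zero : (3 : S31) = 0 := by
  have h1 : (3 : S31) = (PowerSeries.C) 3 := (map_ofNat _ 3).symm
  rw [h1, show (3 : ZMod 3) = 0 from rfl, map_zero]

theorem cube_sub (f : S31) : (1 - f) ^ 3 = 1 - f ^ 3 := by
  linear_combination (f ^ 2 - f) * three_eq_zero

theorem cube_add (f : S31) : (1 + f) ^ 3 = 1 + f ^ 3 := by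
  linear_combination (f + f ^ 2) * three_eq_zero

theorem prod_range_three_mul (g : ℕ → S31) (M : ℕ) :
    ∏ k ∈ Finset.range (3 * M), g k =
      ∏ n ∈ Finset.range M, (g (3 * n) * g (3 * n + 1) * g (3 * n + 2)) := by
  induction M with
  | zero => simp
  | succ M ih =>
      rw [show 3 * (M + 1) = 3 * M + 1 + 1 + 1 by ring, Finset.prod_range_succ,
        Finset.prod_range_succ, Finset.prod_range_succ, ih, Finset.prod_range_succ]
      rw [show 3 * M + 1 + 1 = 3 * M + 2 by ring]
      ring

theorem prod_range_two_mul (g : ℕ → S31) (M : ℕ) :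
    ∏ k ∈ Finset.range (2 * M), g k =
      ∏ n ∈ Finset.range M, (g (2 * n) * g (2 * n + 1)) := by
  induction M with
  | zero => simp
  | succ M ih =>
      rw [show 2 * (M + 1) = 2 * M + 1 + 1 by ring, Finset.prod_range_succ,
        Finset.prod_range_succ, ih, Finset.prod_range_succ]
      ring

noncomputable def Pp (m : ℕ) : S31 := ∏ n ∈ Finset.range m, (1 - qq ^ (n + 1))
noncomputable def Ww (m : ℕ) : S31 := ∏ n ∈ Finset.range m, (1 + qq ^ (n + 1))
noncomputable def Zz (m : ℕ) : S31 :=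
  ∏ n ∈ Finset.range m, ((1 + qq ^ (3 * n + 1)) * (1 + qq ^ (3 * n + 2)))
noncomputable def Qq (m : ℕ) : S31 :=
  ∏ n ∈ Finset.range m,
    ((1 - qq ^ (3 * (n + 1))) * (1 + qq ^ (3 * n + 1)) * (1 + qq ^ (3 * n + 2)))

@[simp] theorem cc_Pp (m : ℕ) : constantCoeff (Pp m) = 1 := by
  rw [Pp, map_prod, Finset.prod_congr rfl fun t _ => cc_one_sub _ (by omega)]
  simp

@[simp] theorem cc_Ww (m : ℕ) : constantCoeff (Ww m) = 1 := by
  rw [Ww, map_prod, Finset.prod_congr rfl fun t _ => cc_one_add _ (by omega)]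
  simp

/-- `Qq m = Pp m ^ 3 * Zz m`. -/
theorem Qq_eq (m : ℕ) : Qq m = Pp m ^ 3 * Zz m := by
  rw [Qq, Pp, Zz, ← Finset.prod_pow, ← Finset.prod_mul_distrib]
  refine Finset.prod_congr rfl fun n _ => ?_
  rw [cube_sub, ← pow_mul, show (n + 1) * 3 = 3 * (n + 1) by ring]
  ring

/-- `Zz m * Ww m ^ 3 = Ww (3 * m)`. -/
theorem Zz_Ww (m : ℕ) : Zz m * Ww m ^ 3 = Ww (3 * m) := by
  rw [Ww, Ww, prod_range_three_mul (fun k => 1 + qq ^ (k + 1)) m, Zz,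
    ← Finset.prod_pow, ← Finset.prod_mul_distrib]
  refine Finset.prod_congr rfl fun n _ => ?_
  rw [cube_add, ← pow_mul, show (n + 1) * 3 = 3 * n + 2 + 1 by ring]

/-- `Pp (2M) * Ww (2M) = Dq (2M)`. -/
theorem Pp_Ww (m : ℕ) : Pp m * Ww m = Dq m := by
  rw [Pp, Ww, Dq, ← Finset.prod_mul_distrib]
  refine Finset.prod_congr rfl fun n _ => ?_
  have : (qq : S31) ^ (n + 1) * qq ^ (n + 1) = qq ^ (2 * (n + 1)) := by
    rw [← pow_add]; congr 1; ring
  linear_combination -this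

/-- `Pp (2M) = Gg M * Dq M`. -/
theorem Pp_split (M : ℕ) : Pp (2 * M) = Gg M * Dq M := by
  rw [Pp, prod_range_two_mul (fun k => 1 - qq ^ (k + 1)) M, Gg, Dq,
    ← Finset.prod_mul_distrib]
  refine Finset.prod_congr rfl fun n _ => ?_
  rw [show 2 * n + 1 + 1 = 2 * (n + 1) by ring]

/-- truncated theta series. -/
noncomputable def Th (M : ℕ) : S31 :=
  ∑ i ∈ Finset.range (2 * M + 1), (-1 : S31) ^ (M + i) * qq ^ dl i M

theorem Th_eq {N : ℕ} (M : ℕ) (hM : M = N + 1) : EqN N (Gg M ^ 2 * Dq M) (Th M) := by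
  rw [Gsq, Finset.sum_mul, Th]
  apply EqN.sum
  intro i hi
  rw [Finset.mem_range] at hi
  rcases le_or_gt (dl i M) N with hd | hd
  · have hb := BDq M hM i (by omega) hd
    have h2 := hb.mul_left ((-1 : S31) ^ (M + i) * qq ^ dl i M)
    rw [mul_one] at h2
    rw [show (-1 : S31) ^ (M + i) * qq ^ dl i M * B (2 * M) i * Dq M =
      (-1 : S31) ^ (M + i) * qq ^ dl i M * (B (2 * M) i * Dq M) by ring]
    exact h2
  · have h0 : EqN N (qq ^ dl i M * ((-1 : S31) ^ (M + i) * (B (2 * M) i * Dq M))) 0 :=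
      EqN_Xpow_mul hd _
    have h1 : EqN N (qq ^ dl i M * (-1 : S31) ^ (M + i)) 0 := EqN_Xpow_mul hd _
    rw [show (-1 : S31) ^ (M + i) * qq ^ dl i M * B (2 * M) i * Dq M =
      qq ^ dl i M * ((-1 : S31) ^ (M + i) * (B (2 * M) i * Dq M)) by ring]
    rw [show (-1 : S31) ^ (M + i) * qq ^ dl i M = qq ^ dl i M * (-1 : S31) ^ (M + i) by ring]
    exact h0.trans h1.symm

theorem neg_one_pow_C (k : ℕ) :
    ((-1 : S31)) ^ k = PowerSeries.C ((-1) ^ k) := by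
  rw [map_pow, map_neg, map_one]

end C31aux

open C31aux PowerSeries in
/-- If a positive integer `N` is not a sum of two (nonnegative) squares, then
`C̄₃₁(N) ≡ 0 (mod 3)`. -/
theorem C31_not_sum_two_squares_mod_three (C : ℕ → ℤ)
    (hC : ∀ N : ℕ, PowerSeries.coeff (R := ℤ) N
      ((PowerSeries.mk fun n => C n) *
        ∏ n ∈ Finset.range (N + 1), (1 - (PowerSeries.X : PowerSeries ℤ) ^ (n + 1))) =
      PowerSeries.coeff (R := ℤ) N
      (∏ n ∈ Finset.range (N + 1),
        ((1 - (PowerSeries.X : PowerSeries ℤ) ^ (3 * (n + 1))) *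
          (1 + PowerSeries.X ^ (3 * n + 1)) * (1 + PowerSeries.X ^ (3 * n + 2)))))
    (N : ℕ) (hN : 0 < N) (h : ¬ ∃ a b : ℕ, N = a ^ 2 + b ^ 2) :
    C N ≡ 0 [ZMOD 3] := by
  classical
  set Ab : S31 := PowerSeries.mk fun n => ((C n : ZMod 3)) with hAbdef
  have hAb : PowerSeries.map (Int.castRingHom (ZMod 3)) (PowerSeries.mk fun n => C n) = Ab := by
    ext n
    rw [PowerSeries.coeff_map, hAbdef, PowerSeries.coeff_mk, PowerSeries.coeff_mk]
    rfl
  have key : ∀ n : ℕ, (coeff n) (Ab * Pp (n + 1)) = (coeff n) (Qq (n + 1)) := by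
    intro n
    have h0 : (Int.castRingHom (ZMod 3)) ((PowerSeries.coeff n) ((PowerSeries.mk fun k => C k) *
          ∏ m ∈ Finset.range (n + 1), (1 - (PowerSeries.X : PowerSeries ℤ) ^ (m + 1)))) =
        (Int.castRingHom (ZMod 3)) ((PowerSeries.coeff n)
          (∏ m ∈ Finset.range (n + 1),
            ((1 - (PowerSeries.X : PowerSeries ℤ) ^ (3 * (m + 1))) *
              (1 + PowerSeries.X ^ (3 * m + 1)) * (1 + PowerSeries.X ^ (3 * m + 2))))) :=
      congrArg _ (hC n)
    rw [← PowerSeries.coeff_map, ← PowerSeries.coeff_map, map_mul, map_prod, map_prod, hAb] at h0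
    simp only [map_mul, map_sub, map_add, map_one, map_pow, PowerSeries.map_X] at h0
    unfold Pp Qq qq
    exact h0
  have stepA : EqN N (Ab * Pp (N + 1)) (Qq (N + 1)) := by
    intro n hn
    have hP : EqN n (Pp (N + 1)) (Pp (n + 1)) := by
      unfold Pp
      exact EqN_prod_extend _ (n + 1) (N + 1) (by omega)
        (fun k hk => EqN_one_sub (by omega))
    have hQ : EqN n (Qq (N + 1)) (Qq (n + 1)) := by
      unfold Qq
      refine EqN_prod_extend _ (n + 1) (N + 1) (by omega) (fun k hk => ?_)
      have t1 : EqN n (1 - qq ^ (3 * (k + 1))) 1 := EqN_one_sub (by omega)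
      have t2 : EqN n (1 + qq ^ (3 * k + 1)) 1 := EqN_one_add (by omega)
      have t3 : EqN n (1 + qq ^ (3 * k + 2)) 1 := EqN_one_add (by omega)
      have := (t1.mul t2).mul t3
      simpa using this
    rw [(hP.mul_left Ab) n le_rfl, key n, (hQ n le_rfl).symm]
  set M : ℕ := N + 1 with hM
  set L : ℕ := 2 * M with hL
  have hPL : EqN N (Pp L) (Pp M) := by
    unfold Pp
    exact EqN_prod_extend _ M L (by omega) (fun k hk => EqN_one_sub (by omega))
  have hWL : EqN N (Ww L) (Ww M) := by
    unfold Ww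
    exact EqN_prod_extend _ M L (by omega) (fun k hk => EqN_one_add (by omega))
  have hW3 : EqN N (Ww (3 * M)) (Ww M) := by
    unfold Ww
    exact EqN_prod_extend _ M (3 * M) (by omega) (fun k hk => EqN_one_add (by omega))
  have c1 : EqN N (Ab * Pp L) (Qq M) := (hPL.mul_left Ab).trans stepA
  have c3 : EqN N (Qq M * Ww L ^ 3) (Pp M ^ 3 * Ww M) := by
    rw [Qq_eq]
    have e1 : EqN N (Pp M ^ 3 * Zz M * Ww L ^ 3) (Pp M ^ 3 * Zz M * Ww M ^ 3) :=
      (hWL.pow 3).mul_left _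
    have e2 : Pp M ^ 3 * Zz M * Ww M ^ 3 = Pp M ^ 3 * Ww (3 * M) := by
      rw [← Zz_Ww M]; ring
    rw [e2] at e1
    exact e1.trans (hW3.mul_left _)
  have c4 : EqN N (Pp M ^ 3 * Ww M) (Pp L ^ 3 * Ww L) := (hPL.pow 3).symm.mul hWL.symm
  have master : EqN N (Ab * (Pp L * Ww L ^ 3)) (Pp L ^ 3 * Ww L) := by
    rw [← mul_assoc]
    exact ((c1.mul_right (Ww L ^ 3)).trans c3).trans c4
  have M2 : EqN N (Ab * Ww L ^ 2) (Pp L ^ 2) := by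
    apply EqN_cancel (v := Pp L * Ww L) (by rw [map_mul, cc_Pp, cc_Ww]; norm_num)
    rw [show Ab * Ww L ^ 2 * (Pp L * Ww L) = Ab * (Pp L * Ww L ^ 3) by ring,
      show Pp L ^ 2 * (Pp L * Ww L) = Pp L ^ 3 * Ww L by ring]
    exact master
  have T3 : EqN N (Th M * Ww L) (Pp L) := by
    have hC1 : EqN N (Th M) (Gg M ^ 2 * Dq M) := (Th_eq M hM).symm
    have e : Gg M ^ 2 * Dq M * Ww L = Gg M * Dq L := by
      rw [hL, ← Pp_Ww (2 * M), Pp_split M]; ring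
    have step1 : EqN N (Th M * Ww L) (Gg M * Dq L) := by
      have := hC1.mul_right (Ww L)
      rw [e] at this
      exact this
    have step2 : EqN N (Gg M * Dq L) (Gg M * Dq M) :=
      (Dq_approx M L (by omega) (by omega)).mul_left _
    have step3 : Gg M * Dq M = Pp L := (Pp_split M).symm
    rw [← step3]
    exact step1.trans step2
  have T2 : EqN N (Th M ^ 2 * Ww L ^ 2) (Pp L ^ 2) := by
    have := T3.pow 2
    rw [mul_pow] at this
    exact this
  have final : EqN N Ab (Th M ^ 2) := by
    apply EqN_cancel (v := Ww L ^ 2) (by rw [map_pow, cc_Ww]; norm_num)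
    exact M2.trans T2.symm
  have coeffTh : (coeff N) (Th M ^ 2) = 0 := by
    rw [sq, Th, Finset.sum_mul_sum, map_sum]
    refine Finset.sum_eq_zero fun i _ => ?_
    rw [map_sum]
    refine Finset.sum_eq_zero fun j _ => ?_
    rw [show (-1 : S31) ^ (M + i) * qq ^ dl i M * ((-1) ^ (M + j) * qq ^ dl j M) =
        ((-1 : S31) ^ (M + i) * (-1) ^ (M + j)) * qq ^ (dl i M + dl j M) by
      rw [pow_add]; ring]
    rw [neg_one_pow_C, neg_one_pow_C, ← map_mul, PowerSeries.coeff_C_mul]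
    rw [show (qq : S31) = PowerSeries.X from rfl, PowerSeries.coeff_X_pow]
    rw [if_neg, mul_zero]
    intro heq
    refine h ⟨(i - M) + (M - i), (j - M) + (M - j), ?_⟩
    rw [heq, dl_sq i M, dl_sq j M]
  have hfin : ((C N : ZMod 3)) = 0 := by
    have h1 : (coeff N) Ab = ((C N : ZMod 3)) := by
      rw [hAbdef, PowerSeries.coeff_mk]
    rw [← h1, final N le_rfl, coeffTh]
  exact Int.modEq_zero_iff_dvd.mpr ((ZMod.intCast_zmod_eq_zero_iff_dvd (C N) 3).mp hfin)
end

section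
/- For every integer n ≥ 1, C̄_{3,1}(n) ≡ 0 (mod 2). -/
open PowerSeries Finset

namespace C31aux

noncomputable def P' (K : ℕ) : PowerSeries (ZMod 2) :=
  ∏ m ∈ Finset.range K, (1 + (X : PowerSeries (ZMod 2)) ^ (m + 1))

lemma two_eq_zero : (2 : PowerSeries (ZMod 2)) = 0 := by
  rw [← map_ofNat (PowerSeries.C (R := ZMod 2)) 2, show ((2 : ZMod 2) = 0) from rfl, map_zero]

lemma one_sub_eq (a : PowerSeries (ZMod 2)) : 1 - a = 1 + a := by
  linear_combination (-a) * two_eq_zero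

lemma coeff_mul_one_add (f : PowerSeries (ZMod 2)) (N m : ℕ) (h : N < m) :
    PowerSeries.coeff (R := ZMod 2) N (f * (1 + X ^ m)) = PowerSeries.coeff (R := ZMod 2) N f := by
  rw [mul_add, mul_one, map_add, PowerSeries.coeff_mul_X_pow', if_neg (by omega)]
  ring

lemma trunc (f : PowerSeries (ZMod 2)) (s : Finset ℕ) (N : ℕ) (h : ∀ m ∈ s, N ≤ m) :
    PowerSeries.coeff (R := ZMod 2) N (f * ∏ m ∈ s, (1 + (X : PowerSeries (ZMod 2)) ^ (m + 1))) =
      PowerSeries.coeff (R := ZMod 2) N f := by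
  induction s using Finset.induction_on generalizing f with
  | empty => simp
  | insert _ _ hx ih =>
    rename_i a s
    rw [Finset.prod_insert hx, ← mul_assoc, ih _ fun m hm => h m (Finset.mem_insert_of_mem hm)]
    exact coeff_mul_one_add f N (a + 1) (by have := h a (Finset.mem_insert_self a s); omega)

lemma coeff_P'_stab (j a b : ℕ) (hj : j + 1 ≤ a) (hab : a ≤ b) :
    PowerSeries.coeff (R := ZMod 2) j (P' b) = PowerSeries.coeff (R := ZMod 2) j (P' a) := by
  have : P' b = P' a * ∏ m ∈ Finset.Ico a b, (1 + (X : PowerSeries (ZMod 2)) ^ (m + 1)) := by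
    rw [P', P', Finset.range_eq_Ico, ← Finset.prod_Ico_consecutive _ (Nat.zero_le a) hab, Finset.range_eq_Ico]
  rw [this, trunc _ _ _ fun m hm => by have := (Finset.mem_Ico.mp hm).1; omega]

lemma P'_triple (k : ℕ) :
    P' (3 * k) = ∏ n ∈ Finset.range k,
      ((1 + (X : PowerSeries (ZMod 2)) ^ (3 * (n + 1))) * (1 + X ^ (3 * n + 1)) *
        (1 + X ^ (3 * n + 2))) := by
  induction k with
  | zero => simp [P']
  | succ k ih =>
    rw [Finset.prod_range_succ, ← ih]
    have h3 : 3 * (k + 1) = (3 * k + 2) + 1 := by ring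
    rw [P', P', h3, Finset.prod_range_succ, Finset.prod_range_succ, Finset.prod_range_succ]
    ring

noncomputable def D : PowerSeries (ZMod 2) :=
  PowerSeries.mk fun N => PowerSeries.coeff (R := ZMod 2) N (P' (N + 1))

end C31aux

/-- For every `n ≥ 1`, `C̄₃₁(n) ≡ 0 (mod 2)`. -/
theorem C31_even (C : ℕ → ℤ)
    (hC : ∀ N : ℕ, PowerSeries.coeff (R := ℤ) N
      ((PowerSeries.mk fun n => C n) *
        ∏ n ∈ Finset.range (N + 1), (1 - (PowerSeries.X : PowerSeries ℤ) ^ (n + 1))) =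
      PowerSeries.coeff (R := ℤ) N
      (∏ n ∈ Finset.range (N + 1),
        ((1 - (PowerSeries.X : PowerSeries ℤ) ^ (3 * (n + 1))) *
          (1 + PowerSeries.X ^ (3 * n + 1)) * (1 + PowerSeries.X ^ (3 * n + 2)))))
    (n : ℕ) (hn : 1 ≤ n) :
    C n ≡ 0 [ZMOD 2] := by
  open C31aux in
  set φ : ℤ →+* ZMod 2 := Int.castRingHom (ZMod 2) with hφ
  set g : PowerSeries (ZMod 2) := PowerSeries.mk fun n => ((C n : ZMod 2)) with hg
  have hmapg : PowerSeries.map φ (PowerSeries.mk fun n => C n) = g := by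
    ext N; simp [hg, hφ]
  have key : ∀ N : ℕ, PowerSeries.coeff (R := ZMod 2) N (g * P' (N + 1)) =
      PowerSeries.coeff (R := ZMod 2) N (P' (N + 1)) := by
    intro N
    have h := congrArg φ (hC N)
    rw [← PowerSeries.coeff_map, ← PowerSeries.coeff_map] at h
    simp only [map_mul, map_prod, map_sub, map_add, map_pow, map_one, PowerSeries.map_X,
      hmapg] at h
    simp only [C31aux.one_sub_eq] at h
    have hl : (∏ n ∈ Finset.range (N + 1), (1 + (X : PowerSeries (ZMod 2)) ^ (n + 1)))
        = P' (N + 1) := rfl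
    rw [hl, ← C31aux.P'_triple (N + 1)] at h
    rw [h, C31aux.coeff_P'_stab N (N + 1) (3 * (N + 1)) (by omega) (by omega)]
  have coeffD : ∀ j, PowerSeries.coeff (R := ZMod 2) j C31aux.D
      = PowerSeries.coeff (R := ZMod 2) j (P' (j + 1)) := fun j => PowerSeries.coeff_mk j _
  have keyD : g * C31aux.D = C31aux.D := by
    ext N
    have h1 : PowerSeries.coeff (R := ZMod 2) N (g * C31aux.D)
        = PowerSeries.coeff (R := ZMod 2) N (g * P' (N + 1)) := by
      rw [PowerSeries.coeff_mul, PowerSeries.coeff_mul]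
      refine Finset.sum_congr rfl fun p hp => ?_
      have hp' := Finset.HasAntidiagonal.mem_antidiagonal.mp hp
      congr 1
      rw [coeffD p.2]
      exact (C31aux.coeff_P'_stab p.2 (p.2 + 1) (N + 1) le_rfl (by omega)).symm
    rw [h1, key N, coeffD N]
  have hD0 : PowerSeries.coeff (R := ZMod 2) 0 C31aux.D = 1 := by
    rw [coeffD 0]
    simp [C31aux.P']
  have hDne : C31aux.D ≠ 0 := by
    intro h0
    rw [h0, map_zero] at hD0
    exact one_ne_zero hD0.symm
  have hg1 : g = 1 := by
    have : (g - 1) * C31aux.D = 0 := by rw [sub_mul, one_mul, keyD, sub_self]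
    rcases mul_eq_zero.mp this with h | h
    · exact sub_eq_zero.mp h
    · exact absurd h hDne
  have hcoeff : ((C n : ZMod 2)) = 0 := by
    have := congrArg (PowerSeries.coeff (R := ZMod 2) n) hg1
    rw [hg, PowerSeries.coeff_mk, PowerSeries.coeff_one, if_neg (by omega)] at this
    exact this
  have hdvd : (2 : ℤ) ∣ C n := by
    have := (ZMod.intCast_zmod_eq_zero_iff_dvd (C n) 2).mp hcoeff
    exact_mod_cast this
  exact (Int.modEq_zero_iff_dvd).mpr hdvd
end

section
/- For every integer n ≥ 1: if n = k^2 or n = 3k^2 for some positive integer k, then C̄_{3,1}(n) ≡ 2 (mod 4); otherwise C̄_{3,1}(n) ≡ 0 (mod 4). -/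
open PowerSeries Finset

variable {R : Type*} [CommRing R]



/-- Truncated equality of power series: agreement of coefficients up to `N`. -/
def Teq (N : ℕ) (f g : R⟦X⟧) : Prop := ∀ i ≤ N, coeff i f = coeff i g

theorem Teq.refl (N : ℕ) (f : R⟦X⟧) : Teq N f f := fun _ _ => rfl

theorem Teq.symm {N : ℕ} {f g : R⟦X⟧} (h : Teq N f g) : Teq N g f :=
  fun i hi => (h i hi).symm

theorem Teq.trans {N : ℕ} {f g h : R⟦X⟧} (h1 : Teq N f g) (h2 : Teq N g h) : Teq N f h :=
  fun i hi => (h1 i hi).trans (h2 i hi)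

theorem Teq.mul {N : ℕ} {f f' g g' : R⟦X⟧} (hf : Teq N f f') (hg : Teq N g g') :
    Teq N (f * g) (f' * g') := by
  intro i hi
  rw [coeff_mul, coeff_mul]
  refine Finset.sum_congr rfl fun p hp => ?_
  rw [Finset.HasAntidiagonal.mem_antidiagonal] at hp
  rw [hf p.1 (le_trans (by omega) hi), hg p.2 (le_trans (by omega) hi)]

theorem Teq.mul_right {N : ℕ} {f f' : R⟦X⟧} (g : R⟦X⟧) (hf : Teq N f f') :
    Teq N (f * g) (f' * g) := hf.mul (Teq.refl N g)

theorem Teq.add {N : ℕ} {f f' g g' : R⟦X⟧} (hf : Teq N f f') (hg : Teq N g g') :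
    Teq N (f + g) (f' + g') := by
  intro i hi; simp [map_add, hf i hi, hg i hi]

theorem Teq.prod {N : ℕ} {ι : Type*} (s : Finset ι) (f g : ι → R⟦X⟧)
    (h : ∀ i ∈ s, Teq N (f i) (g i)) : Teq N (∏ i ∈ s, f i) (∏ i ∈ s, g i) := by
  classical
  induction s using Finset.induction_on with
  | empty => simp [Teq.refl]
  | @insert a s hx ih =>
    rw [Finset.prod_insert hx, Finset.prod_insert hx]
    exact (h a (Finset.mem_insert_self a s)).mul
      (ih fun i hi => h i (Finset.mem_insert_of_mem hi))

theorem Teq.of_le {N M : ℕ} {f g : R⟦X⟧} (h : Teq N f g) (hMN : M ≤ N) : Teq M f g :=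
  fun i hi => h i (le_trans hi hMN)

/-- multiplying by something `Teq N 0` gives `Teq N 0`. -/
theorem Teq.mul_zero {N : ℕ} {f g : R⟦X⟧} (hg : Teq N g 0) : Teq N (f * g) 0 := by
  intro i hi
  rw [coeff_mul]
  rw [map_zero]
  refine Finset.sum_eq_zero fun p hp => ?_
  rw [Finset.HasAntidiagonal.mem_antidiagonal] at hp
  simp [hg p.2 (show p.2 ≤ N by omega)]

/-- Cancellation: if `f*u ≈ g*u` with `u` having unit constant coefficient, then `f ≈ g`. -/
theorem Teq.cancel {N : ℕ} {f g u : R⟦X⟧} (hu : IsUnit (constantCoeff (R := R) u))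
    (h : Teq N (f * u) (g * u)) : Teq N f g := by
  have hU : IsUnit u := isUnit_iff_constantCoeff.mpr hu
  obtain ⟨v, hv⟩ := hU.exists_right_inv
  have := h.mul_right v
  have e1 : f * u * v = f := by rw [mul_assoc, hv, mul_one]
  have e2 : g * u * v = g := by rw [mul_assoc, hv, mul_one]
  rwa [e1, e2] at this

/-- A factor `1 - X^k` with `k > N` is trivial up to level `N`. -/
theorem teq_one_sub_X_pow {N k : ℕ} (hk : N < k) : Teq N ((1 : R⟦X⟧) - X ^ k) 1 := by
  intro i hi
  rw [map_sub, coeff_X_pow, if_neg (by omega), sub_zero]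

theorem teq_one_add_X_pow {N k : ℕ} (hk : N < k) : Teq N ((1 : R⟦X⟧) + X ^ k) 1 := by
  intro i hi
  rw [map_add, coeff_X_pow, if_neg (by omega), add_zero]




/-- Gaussian binomial coefficient in base `q = X^2`, as a power series.
`gb m r` corresponds to `binom(m, r)_{X²}`, and is `0` for `r < 0` or `r > m`. -/
noncomputable def gb : ℕ → ℤ → R⟦X⟧
  | 0, r => if r = 0 then 1 else 0
  | (m+1), r => gb m (r-1) + X ^ (2*r).toNat * gb m r

theorem gb_succ (m : ℕ) (r : ℤ) :
    (gb (m+1) r : R⟦X⟧) = gb m (r-1) + X ^ (2*r).toNat * gb m r := by rw [gb]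

theorem gb_neg : ∀ (m : ℕ) (r : ℤ), r < 0 → (gb m r : R⟦X⟧) = 0 := by
  intro m
  induction m with
  | zero => intro r hr; rw [gb, if_neg (by omega)]
  | succ m ih =>
    intro r hr
    rw [gb_succ, ih (r-1) (by omega), ih r hr, mul_zero, add_zero]

theorem gb_gt : ∀ (m : ℕ) (r : ℤ), (m : ℤ) < r → (gb m r : R⟦X⟧) = 0 := by
  intro m
  induction m with
  | zero => intro r hr; rw [gb, if_neg (by omega)]
  | succ m ih =>
    intro r hr
    rw [gb_succ, ih (r-1) (by push_cast at hr ⊢; omega), ih r (by push_cast at hr ⊢; omega),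
      mul_zero, add_zero]

theorem gb_zero : ∀ (m : ℕ), (gb m 0 : R⟦X⟧) = 1 := by
  intro m
  induction m with
  | zero => rw [gb, if_pos rfl]
  | succ m ih =>
    rw [gb_succ, gb_neg m _ (by omega), ih]
    norm_num

/-- Pascal recurrence (the other form). -/
theorem gb_zero_apply (r : ℤ) : (gb 0 r : R⟦X⟧) = if r = 0 then 1 else 0 := by rw [gb]

theorem gb_pascal' : ∀ (m : ℕ) (r : ℤ),
    (gb (m+1) r : R⟦X⟧) = gb m r + X ^ (2*((m:ℤ)+1-r)).toNat * gb m (r-1) := by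
  intro m
  induction m with
  | zero =>
    intro r
    rw [gb_succ, gb_zero_apply, gb_zero_apply]
    rcases eq_or_ne r 0 with rfl | h0
    · simp
    rcases eq_or_ne r 1 with rfl | h1
    · norm_num
    · rw [if_neg h0, if_neg (show ¬(r - 1 = 0) from by omega)]
      ring
  | succ m ih =>
    intro r
    push_cast
    have L : (gb (m+1+1) r : R⟦X⟧) =
        (gb m (r-1) + X ^ (2*((m:ℤ)+1-(r-1))).toNat * gb m (r-1-1)) +
        X ^ (2*r).toNat * (gb m r + X ^ (2*((m:ℤ)+1-r)).toNat * gb m (r-1)) := by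
      rw [gb_succ (m+1) r, ih (r-1), ih r]
    rw [L, gb_succ m r, gb_succ m (r-1)]
    -- goal is now an algebraic identity among gb m (r-2), gb m (r-1), gb m r
    rcases lt_or_ge r 1 with hr | hr
    · -- r ≤ 0 : gb m (r-1) = gb m (r-1-1) = 0
      rw [gb_neg m (r-1) (by omega), gb_neg m (r-1-1) (by omega),
        show (2*r).toNat = 0 from by omega]
      ring
    rcases lt_or_ge ((m:ℤ)+1) r with hr2 | hr2
    · -- r ≥ m+2 : gb m (r-1) = 0 = gb m r
      rw [gb_gt m (r-1) (by omega), gb_gt m r (by omega),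
        show (2*((m:ℤ)+1-(r-1))).toNat = (2*((m:ℤ)+1+1-r)).toNat from by omega]
      ring
    · -- main case 1 ≤ r ≤ m+1
      rw [show (2*((m:ℤ)+1-(r-1))).toNat = (2*((m:ℤ)+1+1-r)).toNat from by omega]
      have hxy : (X:R⟦X⟧) ^ (2*r).toNat * X ^ (2*((m:ℤ)+1-r)).toNat
          = X ^ (2*((m:ℤ)+1+1-r)).toNat * X ^ (2*(r-1)).toNat := by
        rw [← pow_add, ← pow_add,
          show (2*r).toNat + (2*((m:ℤ)+1-r)).toNat
            = (2*((m:ℤ)+1+1-r)).toNat + (2*(r-1)).toNat from by omega]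
      linear_combination (gb m (r-1) : R⟦X⟧) * hxy


theorem coeff_X_pow_mul_lt {f : R⟦X⟧} {k i : ℕ} (h : i < k) : coeff i (X^k * f) = 0 := by
  rw [coeff_mul]
  refine Finset.sum_eq_zero fun p hp => ?_
  rw [Finset.HasAntidiagonal.mem_antidiagonal] at hp
  rw [coeff_X_pow, if_neg (by omega), zero_mul]

theorem Teq.X_pow_mul {m : ℕ} {f g : R⟦X⟧} (k : ℕ) (h : Teq m f g) :
    Teq (m + k) (X^k * f) (X^k * g) := by
  intro i hi
  rcases lt_or_ge i k with hik | hik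
  · rw [coeff_X_pow_mul_lt hik, coeff_X_pow_mul_lt hik]
  · obtain ⟨d, rfl⟩ : ∃ d, i = d + k := ⟨i - k, by omega⟩
    rw [coeff_X_pow_mul, coeff_X_pow_mul]
    exact h d (by omega)

/-- `Pe b = ∏_{k=1}^{b} (1 - X^{2k})`. -/
noncomputable def Pe (b : ℕ) : R⟦X⟧ := ∏ k ∈ range b, (1 - X ^ (2*(k+1)))

theorem constantCoeff_one_sub_X_pow {k : ℕ} (hk : 0 < k) :
    constantCoeff (R := R) (1 - X ^ k) = 1 := by
  simp [zero_pow hk.ne']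

theorem constantCoeff_Pe (b : ℕ) : constantCoeff (R := R) (Pe b) = 1 := by
  rw [Pe, map_prod]
  rw [Finset.prod_eq_one fun k _ => constantCoeff_one_sub_X_pow (by omega)]

theorem constantCoeff_gb : ∀ (m : ℕ) (r : ℕ), r ≤ m → constantCoeff (R := R) (gb m (r:ℤ)) = 1 := by
  intro m
  induction m with
  | zero => intro r hr; interval_cases r; rw [Nat.cast_zero, gb_zero]; exact map_one _
  | succ m ih =>
    intro r hr
    rcases Nat.eq_zero_or_pos r with rfl | hrpos
    · rw [Nat.cast_zero, gb_zero]; exact map_one _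
    · rw [gb_succ, map_add, map_mul, map_pow, constantCoeff_X,
        zero_pow (by omega : (2*(r:ℤ)).toNat ≠ 0), zero_mul, add_zero,
        show ((r:ℤ) - 1) = ((r-1 : ℕ) : ℤ) from by push_cast; omega]
      exact ih (r-1) (by omega)

/-- Key stabilization: `Pe b * gb (a+b) b ≡ 1 mod X^{2a+1}`. -/
theorem gb_stab : ∀ (b a : ℕ), Teq (2*a) ((Pe b) * gb (a+b) ((b:ℤ)) : R⟦X⟧) 1 := by
  intro b
  induction b with
  | zero =>
    intro a
    rw [show ((0:ℕ):ℤ) = 0 from rfl, gb_zero, Pe]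
    simp only [range_zero, prod_empty, mul_one]
    exact Teq.refl _ _
  | succ b ihb =>
    intro a
    induction a with
    | zero =>
      intro i hi
      interval_cases i
      rw [coeff_zero_eq_constantCoeff, map_mul, constantCoeff_Pe,
        constantCoeff_gb _ _ (by omega), one_mul]
      simp
    | succ a iha =>
      have hd : (gb (a+1+(b+1)) ((b:ℤ)+1) : R⟦X⟧)
          = gb ((a+1)+b) ((b:ℤ)) + X ^ (2*(b+1)) * gb (a+(b+1)) ((b:ℤ)+1) := by
        have h := gb_succ (R := R) (a+1+b) ((b:ℤ)+1)
        rw [show a+1+b+1 = a+1+(b+1) from by omega] at h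
        rw [h, show ((b:ℤ)+1-1) = (b:ℤ) from by ring,
          show (2*((b:ℤ)+1)).toNat = 2*(b+1) from by omega,
          show a+1+b = a+(b+1) from by omega]
      have hPe : (Pe (b+1) : R⟦X⟧) = Pe b * (1 - X ^ (2*(b+1))) := by
        rw [Pe, Pe, prod_range_succ]
      have expand : (Pe (b+1) * gb (a+1+(b+1)) ((b+1:ℕ):ℤ) : R⟦X⟧)
          = (1 - X ^ (2*(b+1))) * (Pe b * gb ((a+1)+b) ((b:ℤ)))
            + X ^ (2*(b+1)) * (Pe (b+1) * gb (a+(b+1)) ((b:ℤ)+1)) := by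
        rw [show (((b+1:ℕ)):ℤ) = (b:ℤ)+1 from by push_cast; ring, hd, hPe]
        ring
      rw [expand]
      have h1 : Teq (2*(a+1)) ((1 - X ^ (2*(b+1))) * (Pe b * gb ((a+1)+b) ((b:ℤ)))
          : R⟦X⟧) ((1 - X ^ (2*(b+1))) * 1) :=
        (Teq.refl _ _).mul (ihb (a+1))
      have h2 : Teq (2*(a+1)) ((X ^ (2*(b+1)) * (Pe (b+1) * gb (a+(b+1)) ((b:ℤ)+1)))
          : R⟦X⟧) (X ^ (2*(b+1)) * 1) := by
        have := Teq.X_pow_mul (m := 2*a) (2*(b+1))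
          (show Teq (2*a) ((Pe (b+1) * gb (a+(b+1)) ((b:ℤ)+1)) : R⟦X⟧) 1 from by
            have := iha
            rwa [show (((b+1:ℕ)):ℤ) = (b:ℤ)+1 from by push_cast; ring] at this)
        exact this.of_le (by omega)
      have h3 := h1.add h2
      have : ((1 - X ^ (2*(b+1))) * 1 + X ^ (2*(b+1)) * 1 : R⟦X⟧) = 1 := by ring
      rwa [this] at h3


noncomputable def sg (j : ℤ) : R⟦X⟧ := ((j.negOnePow : ℤ) : R⟦X⟧)

theorem sg_succ (j : ℤ) : (sg (j+1) : R⟦X⟧) = -sg j := by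
  rw [sg, sg, Int.negOnePow_succ]; push_cast; ring

theorem sg_pred (j : ℤ) : (sg (j-1) : R⟦X⟧) = -sg j := by
  have := sg_succ (R := R) (j-1)
  rw [sub_add_cancel] at this
  rw [this, neg_neg]

noncomputable def Podd (n : ℕ) : R⟦X⟧ := ∏ k ∈ range n, (1 - X ^ (2*k+1))

noncomputable def Sth (n : ℕ) : R⟦X⟧ :=
  ∑ j ∈ Icc (-(n:ℤ)) (n:ℤ), sg j * X ^ (j.natAbs^2) * gb (2*n) ((n:ℤ)+j)

theorem sum_shift {M : Type*} [AddCommMonoid M] (a b c : ℤ) (f : ℤ → M) :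
    ∑ j ∈ Icc a b, f (j + c) = ∑ j ∈ Icc (a+c) (b+c), f j := by
  rw [← Finset.map_add_right_Icc, Finset.sum_map]
  rfl

/-- Expansion of `gb (2n+2)` in terms of `gb (2n)`. -/
theorem key_expand (n : ℕ) (j : ℤ) (hj : -((n:ℤ)+1) ≤ j) (hj' : j ≤ (n:ℤ)+1) :
    (gb (2*n+2) ((n:ℤ)+1+j) : R⟦X⟧)
      = gb (2*n) ((n:ℤ)+j) + X^(4*n+2) * gb (2*n) ((n:ℤ)+j)
        + X^((2*((n:ℤ)+1+j)).toNat) * gb (2*n) ((n:ℤ)+1+j)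
        + X^((2*((n:ℤ)+1-j)).toNat) * gb (2*n) ((n:ℤ)+j-1) := by
  rw [show 2*n+2 = (2*n+1)+1 from rfl, gb_succ (2*n+1) ((n:ℤ)+1+j),
    gb_pascal' (2*n) ((n:ℤ)+1+j-1), gb_pascal' (2*n) ((n:ℤ)+1+j),
    show (n:ℤ)+1+j-1 = (n:ℤ)+j from by ring,
    show (n:ℤ)+j-1 = (n:ℤ)+j-1 from rfl,
    show (2*(((2*n:ℕ):ℤ)+1-((n:ℤ)+j))).toNat = (2*((n:ℤ)+1-j)).toNat from by push_cast; omega,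
    show (2*(((2*n:ℕ):ℤ)+1-((n:ℤ)+1+j))).toNat = (2*((n:ℤ)-j)).toNat from by push_cast; omega]
  rcases lt_or_ge ((n:ℤ)+j) 0 with hc | hc
  · rw [gb_neg (2*n) ((n:ℤ)+j) hc]
    ring
  rcases lt_or_ge ((2*n:ℕ):ℤ) ((n:ℤ)+j) with hc2 | hc2
  · rw [gb_gt (2*n) ((n:ℤ)+j) hc2]
    ring
  · have hxy : (X : R⟦X⟧)^((2*((n:ℤ)+1+j)).toNat) * X^((2*((n:ℤ)-j)).toNat) = X^(4*n+2) := by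
      rw [← pow_add]
      congr 1
      push_cast at hc hc2 ⊢
      omega
    linear_combination (gb (2*n) ((n:ℤ)+j) : R⟦X⟧) * hxy

theorem natAbs_sq_add (n : ℕ) (j : ℤ) (hj : -((n:ℤ)+1) ≤ j) :
    j.natAbs^2 + (2*((n:ℤ)+1+j)).toNat = (2*n+1) + (j+1).natAbs^2 := by
  have h3 : (0:ℤ) ≤ 2*((n:ℤ)+1+j) := by omega
  apply @Nat.cast_injective ℤ _ _
  push_cast
  rw [sq_abs, sq_abs, Int.toNat_of_nonneg h3]
  ring

theorem natAbs_sq_sub (n : ℕ) (j : ℤ) (hj : j ≤ (n:ℤ)+1) :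
    j.natAbs^2 + (2*((n:ℤ)+1-j)).toNat = (2*n+1) + (j-1).natAbs^2 := by
  have h3 : (0:ℤ) ≤ 2*((n:ℤ)+1-j) := by omega
  apply @Nat.cast_injective ℤ _ _
  push_cast
  rw [sq_abs, sq_abs, Int.toNat_of_nonneg h3]
  ring

theorem Sth_succ (n : ℕ) : (Sth (n+1) : R⟦X⟧) = (1 - X^(2*n+1))^2 * Sth n := by
  have hIcc : Icc (-((n+1:ℕ):ℤ)) ((n+1:ℕ):ℤ) = Icc (-((n:ℤ)+1)) ((n:ℤ)+1) := by
    norm_num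
  have hL : (Sth (n+1) : R⟦X⟧)
      = ∑ j ∈ Icc (-((n:ℤ)+1)) ((n:ℤ)+1),
          sg j * X ^ (j.natAbs^2) * gb (2*n+2) ((n:ℤ)+1+j) := by
    rw [Sth, hIcc]
    refine Finset.sum_congr rfl fun j hj => ?_
    rw [show 2*(n+1) = 2*n+2 from by ring, show (((n+1:ℕ)):ℤ) = (n:ℤ)+1 from by push_cast; ring]
  rw [hL]
  have hsplit : ∑ j ∈ Icc (-((n:ℤ)+1)) ((n:ℤ)+1),
      sg j * X ^ (j.natAbs^2) * gb (2*n+2) ((n:ℤ)+1+j)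
      = (∑ j ∈ Icc (-((n:ℤ)+1)) ((n:ℤ)+1), (sg j * X ^ (j.natAbs^2) * gb (2*n) ((n:ℤ)+j) : R⟦X⟧))
      + (∑ j ∈ Icc (-((n:ℤ)+1)) ((n:ℤ)+1), X^(4*n+2) * (sg j * X ^ (j.natAbs^2) * gb (2*n) ((n:ℤ)+j)))
      + (∑ j ∈ Icc (-((n:ℤ)+1)) ((n:ℤ)+1), (-(X^(2*n+1))) * (sg (j+1) * X ^ ((j+1).natAbs^2) * gb (2*n) ((n:ℤ)+(j+1))))
      + (∑ j ∈ Icc (-((n:ℤ)+1)) ((n:ℤ)+1), (-(X^(2*n+1))) * (sg (j-1) * X ^ ((j-1).natAbs^2) * gb (2*n) ((n:ℤ)+(j-1)))) := by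
    rw [← sum_add_distrib, ← sum_add_distrib, ← sum_add_distrib]
    refine Finset.sum_congr rfl fun j hj => ?_
    rw [mem_Icc] at hj
    rw [key_expand n j hj.1 hj.2]
    have e2 : (X : R⟦X⟧) ^ (j.natAbs^2) * X^((2*((n:ℤ)+1+j)).toNat)
        = X^(2*n+1) * X^((j+1).natAbs^2) := by
      rw [← pow_add, ← pow_add, natAbs_sq_add n j hj.1]
    have e3 : (X : R⟦X⟧) ^ (j.natAbs^2) * X^((2*((n:ℤ)+1-j)).toNat)
        = X^(2*n+1) * X^((j-1).natAbs^2) := by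
      rw [← pow_add, ← pow_add, natAbs_sq_sub n j hj.2]
    have s1 : (sg (j+1) : R⟦X⟧) = -sg j := sg_succ j
    have s2 : (sg (j-1) : R⟦X⟧) = -sg j := sg_pred j
    have a1 : (n:ℤ)+(j+1) = (n:ℤ)+1+j := by ring
    have a2 : (n:ℤ)+(j-1) = (n:ℤ)+j-1 := by ring
    rw [s1, s2, a1, a2]
    linear_combination (sg j : R⟦X⟧) * gb (2*n) ((n:ℤ)+1+j) * e2
      + (sg j : R⟦X⟧) * gb (2*n) ((n:ℤ)+j-1) * e3
  rw [hsplit]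
  -- now identify each sum with (a multiple of) Sth n
  have hsub : Icc (-(n:ℤ)) (n:ℤ) ⊆ Icc (-((n:ℤ)+1)) ((n:ℤ)+1) :=
    Finset.Icc_subset_Icc (by omega) (by omega)
  have hvan : ∀ j ∈ Icc (-((n:ℤ)+1)) ((n:ℤ)+1), j ∉ Icc (-(n:ℤ)) (n:ℤ) →
      (sg j * X ^ (j.natAbs^2) * gb (2*n) ((n:ℤ)+j) : R⟦X⟧) = 0 := by
    intro j hj hj'
    rw [mem_Icc] at hj
    rw [mem_Icc] at hj'
    rcases lt_or_ge ((n:ℤ)+j) 0 with hc | hc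
    · rw [gb_neg (2*n) _ hc, mul_zero]
    · rw [gb_gt (2*n) _ (by push_cast; omega), mul_zero]
  have h1 : ∑ j ∈ Icc (-((n:ℤ)+1)) ((n:ℤ)+1), (sg j * X ^ (j.natAbs^2) * gb (2*n) ((n:ℤ)+j) : R⟦X⟧)
      = Sth n := by
    rw [Sth]
    exact (Finset.sum_subset hsub hvan).symm
  have h2 : ∑ j ∈ Icc (-((n:ℤ)+1)) ((n:ℤ)+1),
      (X^(4*n+2) * (sg j * X ^ (j.natAbs^2) * gb (2*n) ((n:ℤ)+j)) : R⟦X⟧)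
      = X^(4*n+2) * Sth n := by
    rw [← Finset.mul_sum, h1]
  have hshift1 : ∑ j ∈ Icc (-((n:ℤ)+1)) ((n:ℤ)+1),
      ((-(X^(2*n+1))) * (sg (j+1) * X ^ ((j+1).natAbs^2) * gb (2*n) ((n:ℤ)+(j+1))) : R⟦X⟧)
      = -(X^(2*n+1)) * Sth n := by
    rw [← Finset.mul_sum]
    congr 1
    rw [sum_shift (-((n:ℤ)+1)) ((n:ℤ)+1) 1 (fun j => (sg j * X ^ (j.natAbs^2) * gb (2*n) ((n:ℤ)+j) : R⟦X⟧))]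
    rw [Sth]
    refine (Finset.sum_subset (Finset.Icc_subset_Icc (by omega) (by omega)) ?_).symm
    intro j hj hj'
    rw [mem_Icc] at hj hj'
    rw [gb_gt (2*n) _ (by push_cast; omega), mul_zero]
  have hshift2 : ∑ j ∈ Icc (-((n:ℤ)+1)) ((n:ℤ)+1),
      ((-(X^(2*n+1))) * (sg (j-1) * X ^ ((j-1).natAbs^2) * gb (2*n) ((n:ℤ)+(j-1))) : R⟦X⟧)
      = -(X^(2*n+1)) * Sth n := by
    rw [← Finset.mul_sum]
    congr 1
    have := sum_shift (-((n:ℤ)+1)) ((n:ℤ)+1) (-1) (fun j => (sg j * X ^ (j.natAbs^2) * gb (2*n) ((n:ℤ)+j) : R⟦X⟧))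
    simp only [show ∀ j : ℤ, j + (-1) = j - 1 from fun j => by ring] at this
    rw [this, Sth]
    refine (Finset.sum_subset (Finset.Icc_subset_Icc (by omega) (by omega)) ?_).symm
    intro j hj hj'
    rw [mem_Icc] at hj hj'
    rw [gb_neg (2*n) _ (by omega), mul_zero]
  rw [h1, h2, hshift1, hshift2]
  have : (4*n+2) = (2*n+1) + (2*n+1) := by ring
  rw [this, pow_add]
  ring

theorem jtp : ∀ n : ℕ, (Podd n : R⟦X⟧)^2 = Sth n := by
  intro n
  induction n with
  | zero =>
    rw [Podd, Sth]
    norm_num [sg, gb_zero]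
  | succ n ih =>
    rw [Sth_succ, ← ih, Podd, prod_range_succ, ← Podd]
    ring


theorem Teq.sum {N : ℕ} {ι : Type*} (s : Finset ι) (f g : ι → R⟦X⟧)
    (h : ∀ i ∈ s, Teq N (f i) (g i)) : Teq N (∑ i ∈ s, f i) (∑ i ∈ s, g i) := by
  intro i hi
  rw [map_sum, map_sum]
  exact Finset.sum_congr rfl fun j hj => h j hj i hi

theorem Teq.X_pow_mul_one {N e m : ℕ} {f : R⟦X⟧} (h : Teq m f 1) (he : N ≤ e + m) :
    Teq N (X^e * f) (X^e) := by
  intro i hi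
  rcases lt_or_ge i e with hie | hie
  · rw [coeff_X_pow_mul_lt hie, coeff_X_pow, if_neg (by omega)]
  · obtain ⟨d, rfl⟩ : ∃ d, i = d + e := ⟨i - e, by omega⟩
    rw [coeff_X_pow_mul, h d (by omega), coeff_X_pow, coeff_one]
    by_cases hd : d = 0
    · simp [hd]
    · rw [if_neg hd, if_neg (by omega)]

/-- drop "extra" unit-like factor: if `g*u ≈ h` and `u ≈ 1` then `g ≈ h` (level N). -/
theorem Teq.strip {N : ℕ} {g u h : R⟦X⟧} (h1 : Teq N (g * u) h) (h2 : Teq N u 1) :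
    Teq N g h := by
  have : Teq N (g * u) (g * 1) := (Teq.refl N g).mul h2
  rw [mul_one] at this
  exact this.symm.trans h1

/-- `P1 M = ∏_{m=1}^{M} (1 - X^m)`. -/
noncomputable def P1 (M : ℕ) : R⟦X⟧ := ∏ k ∈ range M, (1 - X ^ (k+1))

theorem P1_succ (n : ℕ) : (P1 (n+1) : R⟦X⟧) = P1 n * (1 - X^(n+1)) := by
  rw [P1, P1, prod_range_succ]

theorem Podd_succ (n : ℕ) : (Podd (n+1) : R⟦X⟧) = Podd n * (1 - X^(2*n+1)) := by
  rw [Podd, Podd, prod_range_succ]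

theorem Pe_succ (n : ℕ) : (Pe (n+1) : R⟦X⟧) = Pe n * (1 - X^(2*n+2)) := by
  rw [Pe, Pe, prod_range_succ, show 2*(n+1) = 2*n+2 from by ring]

theorem P1_split : ∀ n : ℕ, (P1 (2*n) : R⟦X⟧) = Podd n * Pe n := by
  intro n
  induction n with
  | zero => rw [P1, Podd, Pe]; simp
  | succ n ih =>
    rw [show 2*(n+1) = (2*n+1)+1 from by ring, P1_succ, show 2*n+1 = (2*n)+1 from rfl,
      P1_succ, ih, Podd_succ, Pe_succ]
    ring_nf

/-- truncated theta function `∑_{j=-n}^n (-1)^j X^{j²}`. -/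
noncomputable def Th (n : ℕ) : R⟦X⟧ := ∑ j ∈ Icc (-(n:ℤ)) (n:ℤ), sg j * X ^ (j.natAbs^2)

theorem Pe_extra {b n : ℕ} (hbn : b ≤ n) :
    (Pe n : R⟦X⟧) = Pe b * ∏ k ∈ Ico b n, (1 - X ^ (2*(k+1))) := by
  rw [Pe, Pe, Finset.range_eq_Ico, Finset.range_eq_Ico]
  exact (Finset.prod_Ico_consecutive _ (Nat.zero_le b) hbn).symm

theorem teq_Ico_one {N b n : ℕ} (h : N < 2*(b+1)) :
    Teq N (∏ k ∈ Ico b n, ((1:R⟦X⟧) - X ^ (2*(k+1)))) 1 := by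
  have := Teq.prod (R := R) (N := N) (Ico b n) (fun k => 1 - X ^ (2*(k+1))) (fun _ => 1)
    (fun k hk => by
      rw [mem_Ico] at hk
      exact teq_one_sub_X_pow (by omega))
  rwa [Finset.prod_const_one] at this

/-- Stabilization at fixed `Pe n`:  `Pe n * gb (2n) (n+j) ≈ 1` up to level `2n - 2|j|`. -/
theorem stab_fixed (n : ℕ) (j : ℤ) (hj1 : -(n:ℤ) ≤ j) (hj2 : j ≤ (n:ℤ)) :
    Teq (2*n - 2*j.natAbs) ((Pe n : R⟦X⟧) * gb (2*n) ((n:ℤ)+j)) 1 := by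
  set b : ℕ := ((n:ℤ)+j).toNat with hb
  set a : ℕ := ((n:ℤ)-j).toNat with ha
  have hab : a + b = 2*n := by omega
  have hcast : ((b:ℤ)) = (n:ℤ)+j := by omega
  have hstab : Teq (2*a) ((Pe b : R⟦X⟧) * gb (2*n) ((n:ℤ)+j)) 1 := by
    have := gb_stab (R := R) b a
    rwa [hab, hcast] at this
  rcases le_or_gt b n with hbn | hbn
  · -- j ≤ 0 case (b ≤ n): Pe n = Pe b * extra
    have h2 : Teq (2*n - 2*j.natAbs) ((Pe b : R⟦X⟧) * gb (2*n) ((n:ℤ)+j)) 1 :=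
      hstab.of_le (by omega)
    have h3 : Teq (2*n - 2*j.natAbs) (∏ k ∈ Ico b n, ((1:R⟦X⟧) - X ^ (2*(k+1)))) 1 :=
      teq_Ico_one (by omega)
    have := (h2.mul h3)
    rw [show ((Pe b : R⟦X⟧) * gb (2*n) ((n:ℤ)+j)) * (∏ k ∈ Ico b n, ((1:R⟦X⟧) - X ^ (2*(k+1))))
        = (Pe b * ∏ k ∈ Ico b n, (1 - X ^ (2*(k+1)))) * gb (2*n) ((n:ℤ)+j) from by ring,
      ← Pe_extra hbn, one_mul] at this
    exact this
  · -- j > 0 case (b > n): Pe b = Pe n * extra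
    have hx : (Pe b : R⟦X⟧) = Pe n * ∏ k ∈ Ico n b, (1 - X ^ (2*(k+1))) := Pe_extra hbn.le
    rw [hx] at hstab
    have h2 : Teq (2*n - 2*j.natAbs) ((Pe n : R⟦X⟧) * (∏ k ∈ Ico n b, (1 - X ^ (2*(k+1))))
        * gb (2*n) ((n:ℤ)+j)) 1 := hstab.of_le (by omega)
    have h3 : Teq (2*n - 2*j.natAbs) (∏ k ∈ Ico n b, ((1:R⟦X⟧) - X ^ (2*(k+1)))) 1 :=
      teq_Ico_one (by omega)
    refine Teq.strip (u := ∏ k ∈ Ico n b, ((1:R⟦X⟧) - X ^ (2*(k+1)))) ?_ h3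
    rw [show (Pe n : R⟦X⟧) * gb (2*n) ((n:ℤ)+j) * (∏ k ∈ Ico n b, (1 - X ^ (2*(k+1))))
      = (Pe n : R⟦X⟧) * (∏ k ∈ Ico n b, (1 - X ^ (2*(k+1)))) * gb (2*n) ((n:ℤ)+j) from by ring]
    exact h2

/-- Gauss's identity, truncated, part 1: `Podd n ^ 2 * Pe n ≈ Th n` at level `N` for `n = N+1`. -/
theorem gauss_core (N : ℕ) : Teq N ((Podd (N+1) : R⟦X⟧)^2 * Pe (N+1)) (Th (N+1)) := by
  set n := N + 1 with hn
  rw [jtp n, Sth, Th, Finset.sum_mul]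
  refine Teq.sum _ _ _ fun j hj => ?_
  rw [mem_Icc] at hj
  have hstab := stab_fixed (R := R) n j hj.1 hj.2
  have hterm : Teq N ((X : R⟦X⟧)^(j.natAbs^2) * (Pe n * gb (2*n) ((n:ℤ)+j))) (X^(j.natAbs^2)) := by
    refine Teq.X_pow_mul_one hstab ?_
    have h1 : j.natAbs ≤ n := by omega
    have h2 : 2*(j.natAbs) ≤ j.natAbs^2 + 1 := by
      rcases Nat.lt_or_ge j.natAbs 2 with h | h
      · interval_cases h3 : j.natAbs <;> simp
      · calc 2*(j.natAbs) ≤ j.natAbs*j.natAbs := by nlinarith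
          _ ≤ j.natAbs^2 + 1 := by rw [sq]; omega
    generalize hB : j.natAbs^2 = B at *
    omega
  have := (Teq.refl N (sg j : R⟦X⟧)).mul hterm
  rw [show (sg j : R⟦X⟧) * (X^(j.natAbs^2) * (Pe n * gb (2*n) ((n:ℤ)+j)))
      = sg j * X ^ (j.natAbs^2) * gb (2*n) ((n:ℤ)+j) * Pe n from by ring] at this
  exact this

/-- Gauss's identity truncated: `P1 M ^ 2 ≈ Th (N+1) * Pe M'` at level `N`. -/
theorem gauss (N : ℕ) :
    Teq N ((P1 (2*(N+1)) : R⟦X⟧)^2) (Th (N+1) * Pe (N+1)) := by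
  rw [P1_split, mul_pow, sq (Pe (N+1))]
  have := (gauss_core (R := R) N).mul (Teq.refl N (Pe (N+1)))
  rw [show (Podd (N+1) : R⟦X⟧)^2 * Pe (N+1) * Pe (N+1)
      = Podd (N+1)^2 * (Pe (N+1) * Pe (N+1)) from by ring] at this
  exact this


/-- Dilation `X ↦ X^d` on power series. -/
noncomputable def dil (d : ℕ) (f : R⟦X⟧) : R⟦X⟧ :=
  PowerSeries.mk fun i => if d ∣ i then coeff (i/d) f else 0

theorem coeff_dil (d : ℕ) (f : R⟦X⟧) (i : ℕ) :
    coeff i (dil d f) = if d ∣ i then coeff (i/d) f else 0 := by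
  rw [dil, coeff_mk]

theorem dil_add (d : ℕ) (f g : R⟦X⟧) : dil d (f + g) = dil d f + dil d g := by
  ext i
  rw [map_add, coeff_dil, coeff_dil, coeff_dil]
  split_ifs with h
  · rw [map_add]
  · rw [add_zero]

theorem dil_one (d : ℕ) (hd : 0 < d) : dil d (1 : R⟦X⟧) = 1 := by
  ext i
  rw [coeff_dil]
  by_cases h : d ∣ i
  · obtain ⟨t, rfl⟩ := h
    rw [if_pos ⟨t, rfl⟩, Nat.mul_div_cancel_left t hd, coeff_one, coeff_one]
    by_cases ht : t = 0
    · subst ht; rw [if_pos rfl, if_pos (by omega)]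
    · rw [if_neg ht, if_neg (by positivity <;> omega)]
  · rw [if_neg h, coeff_one, if_neg (by rintro rfl; exact h ⟨0, by omega⟩)]

theorem dil_X_pow (d : ℕ) (hd : 0 < d) (k : ℕ) : dil d ((X : R⟦X⟧)^k) = X^(d*k) := by
  ext i
  rw [coeff_dil, coeff_X_pow]
  by_cases h : d ∣ i
  · obtain ⟨t, rfl⟩ := h
    rw [if_pos ⟨t, rfl⟩, Nat.mul_div_cancel_left t hd, coeff_X_pow]
    by_cases h2 : t = k
    · subst h2; rw [if_pos rfl, if_pos rfl]
    · rw [if_neg h2, if_neg (fun hh => h2 (Nat.eq_of_mul_eq_mul_left hd hh))]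
  · rw [if_neg h, coeff_X_pow, if_neg (fun hh => h ⟨k, hh⟩)]

theorem sum_multiples {M : Type*} [AddCommMonoid M] (d m : ℕ) (hd : 0 < d) (h : ℕ → M)
    (hvan : ∀ k, ¬ d ∣ k → h k = 0) :
    ∑ k ∈ range (d*m+1), h k = ∑ t ∈ range (m+1), h (d*t) := by
  rw [show ∑ t ∈ range (m+1), h (d*t) = ∑ k ∈ (range (m+1)).image (d * ·), h k from
    (Finset.sum_image fun a _ b _ hab => by
      simpa using Nat.eq_of_mul_eq_mul_left hd hab).symm]
  refine (Finset.sum_subset ?_ ?_).symm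
  · intro k hk
    simp only [Finset.mem_image, Finset.mem_range] at hk ⊢
    obtain ⟨t, ht, rfl⟩ := hk
    have : d*t ≤ d*m := Nat.mul_le_mul_left d (by omega)
    omega
  · intro k hk hk2
    by_cases hdvd : d ∣ k
    · obtain ⟨t, rfl⟩ := hdvd
      exfalso
      apply hk2
      rw [Finset.mem_range] at hk
      refine Finset.mem_image.mpr ⟨t, Finset.mem_range.mpr ?_, rfl⟩
      have h3 : d*t ≤ d*m := by omega
      exact lt_of_le_of_lt (Nat.le_of_mul_le_mul_left h3 hd) (by omega)
    · exact hvan k hdvd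

theorem dil_mul (d : ℕ) (hd : 0 < d) (f g : R⟦X⟧) :
    dil d (f * g) = dil d f * dil d g := by
  ext i
  rw [coeff_dil]
  by_cases h : d ∣ i
  · obtain ⟨m, rfl⟩ := h
    rw [if_pos ⟨m, rfl⟩, Nat.mul_div_cancel_left m hd, coeff_mul, coeff_mul,
      Finset.Nat.sum_antidiagonal_eq_sum_range_succ_mk,
      Finset.Nat.sum_antidiagonal_eq_sum_range_succ_mk,
      sum_multiples d m hd _ (fun k hk => by rw [coeff_dil, if_neg hk, zero_mul])]
    refine Finset.sum_congr rfl fun t ht => ?_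
    rw [Finset.mem_range] at ht
    obtain ⟨u, rfl⟩ : ∃ u, m = t + u := ⟨m - t, by omega⟩
    rw [coeff_dil, coeff_dil, if_pos ⟨t, rfl⟩, Nat.mul_div_cancel_left t hd,
      show t + u - t = u from by omega,
      show d*(t+u) - d*t = d*u from by rw [Nat.mul_add]; omega,
      if_pos ⟨u, rfl⟩, Nat.mul_div_cancel_left u hd]
  · rw [if_neg h, coeff_mul, Finset.Nat.sum_antidiagonal_eq_sum_range_succ_mk]
    refine (Finset.sum_eq_zero fun k hk => ?_).symm
    rw [Finset.mem_range] at hk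
    by_cases hk2 : d ∣ k
    · have h2 : ¬ d ∣ (i - k) := by
        rintro ⟨t, ht⟩
        obtain ⟨s, rfl⟩ := hk2
        exact h ⟨s + t, by rw [Nat.mul_add]; omega⟩
      rw [coeff_dil d g, if_neg h2, mul_zero]
    · rw [coeff_dil d f, if_neg hk2, zero_mul]

theorem dil_prod (d : ℕ) (hd : 0 < d) {ι : Type*} (s : Finset ι) (f : ι → R⟦X⟧) :
    dil d (∏ i ∈ s, f i) = ∏ i ∈ s, dil d (f i) := by
  classical
  induction s using Finset.induction_on with
  | empty => simp [dil_one d hd]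
  | @insert a s hx ih =>
    rw [Finset.prod_insert hx, Finset.prod_insert hx, dil_mul d hd, ih]

theorem dil_sum (d : ℕ) {ι : Type*} (s : Finset ι) (f : ι → R⟦X⟧) :
    dil d (∑ i ∈ s, f i) = ∑ i ∈ s, dil d (f i) := by
  classical
  induction s using Finset.induction_on with
  | empty =>
    ext i
    rw [Finset.sum_empty, Finset.sum_empty, coeff_dil]
    split_ifs <;> simp
  | @insert a s hx ih =>
    rw [Finset.sum_insert hx, Finset.sum_insert hx, dil_add, ih]

theorem dil_sub (d : ℕ) (f g : R⟦X⟧) : dil d (f - g) = dil d f - dil d g := by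
  ext i
  rw [map_sub, coeff_dil, coeff_dil, coeff_dil]
  split_ifs with h
  · rw [map_sub]
  · rw [sub_zero]

theorem Teq.dil {N : ℕ} {f g : R⟦X⟧} (d : ℕ) (hd : 0 < d) (h : Teq N f g) :
    Teq N (dil d f) (dil d g) := by
  intro i hi
  rw [coeff_dil, coeff_dil]
  split_ifs with hdvd
  · exact h (i/d) (le_trans (Nat.div_le_self i d) hi)
  · rfl


noncomputable def Q1 (M : ℕ) : R⟦X⟧ := ∏ k ∈ range M, (1 + X ^ (k+1))
noncomputable def P3 (M : ℕ) : R⟦X⟧ := ∏ k ∈ range M, (1 - X ^ (3*(k+1)))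
noncomputable def Q3 (M : ℕ) : R⟦X⟧ := ∏ k ∈ range M, (1 + X ^ (3*(k+1)))
noncomputable def P6 (M : ℕ) : R⟦X⟧ := ∏ k ∈ range M, (1 - X ^ (6*(k+1)))
noncomputable def QA (M : ℕ) : R⟦X⟧ := ∏ k ∈ range M, (1 + X ^ (3*k+1))
noncomputable def QB (M : ℕ) : R⟦X⟧ := ∏ k ∈ range M, (1 + X ^ (3*k+2))

theorem pair1 (M : ℕ) : (P1 M : R⟦X⟧) * Q1 M = Pe M := by
  rw [P1, Q1, Pe, ← Finset.prod_mul_distrib]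
  refine Finset.prod_congr rfl fun k _ => ?_
  have : ((X : R⟦X⟧)^(k+1))^2 = X^(2*(k+1)) := by rw [← pow_mul]; ring_nf
  linear_combination this

theorem pair3 (M : ℕ) : (P3 M : R⟦X⟧) * Q3 M = P6 M := by
  rw [P3, Q3, P6, ← Finset.prod_mul_distrib]
  refine Finset.prod_congr rfl fun k _ => ?_
  have : ((X : R⟦X⟧)^(3*(k+1)))^2 = X^(6*(k+1)) := by rw [← pow_mul]; ring_nf
  linear_combination this

theorem Q1_succ (M : ℕ) : (Q1 (M+1) : R⟦X⟧) = Q1 M * (1 + X^(M+1)) := by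
  rw [Q1, Q1, prod_range_succ]

theorem QA_succ (M : ℕ) : (QA (M+1) : R⟦X⟧) = QA M * (1 + X^(3*M+1)) := by
  rw [QA, QA, prod_range_succ]

theorem QB_succ (M : ℕ) : (QB (M+1) : R⟦X⟧) = QB M * (1 + X^(3*M+2)) := by
  rw [QB, QB, prod_range_succ]

theorem Q3_succ (M : ℕ) : (Q3 (M+1) : R⟦X⟧) = Q3 M * (1 + X^(3*M+3)) := by
  rw [Q3, Q3, prod_range_succ, show 3*(M+1) = 3*M+3 from by ring]

theorem tri : ∀ M : ℕ, (Q1 (3*M) : R⟦X⟧) = QA M * QB M * Q3 M := by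
  intro M
  induction M with
  | zero => rw [Q1, QA, QB, Q3]; simp
  | succ M ih =>
    rw [show 3*(M+1) = (3*M+1+1)+1 from by ring, Q1_succ, show 3*M+1+1 = (3*M+1)+1 from rfl,
      Q1_succ, show 3*M+1 = (3*M)+1 from rfl, Q1_succ, ih, QA_succ, QB_succ, Q3_succ,
      show 3*M+1+1 = 3*M+2 from by ring, show 3*M+2+1 = 3*M+3 from by ring]
    ring

theorem P3_dil (M : ℕ) : (P3 M : R⟦X⟧) = dil 3 (P1 M) := by
  rw [P3, P1, dil_prod 3 (by norm_num)]
  refine Finset.prod_congr rfl fun k _ => ?_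
  rw [dil_sub, dil_one 3 (by norm_num), dil_X_pow 3 (by norm_num)]

theorem P6_dil (M : ℕ) : (P6 M : R⟦X⟧) = dil 3 (Pe M) := by
  rw [P6, Pe, dil_prod 3 (by norm_num)]
  refine Finset.prod_congr rfl fun k _ => ?_
  rw [dil_sub, dil_one 3 (by norm_num), dil_X_pow 3 (by norm_num),
    show 3*(2*(k+1)) = 6*(k+1) from by ring]


theorem teq_P1_ext {N M M' : ℕ} (h : N < M) (h2 : M ≤ M') : Teq N (P1 M : R⟦X⟧) (P1 M') := by
  rw [P1, P1, Finset.range_eq_Ico, Finset.range_eq_Ico, ← Finset.prod_Ico_consecutive _ (Nat.zero_le M) h2]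
  have : Teq N (∏ k ∈ Ico M M', ((1:R⟦X⟧) - X ^ (k+1))) 1 := by
    have := Teq.prod (R := R) (N := N) (Ico M M') (fun k => 1 - X ^ (k+1)) (fun _ => 1)
      (fun k hk => by rw [mem_Ico] at hk; exact teq_one_sub_X_pow (by omega))
    rwa [Finset.prod_const_one] at this
  have h3 := (Teq.refl (R := R) N (∏ k ∈ Ico 0 M, (1 - X ^ (k+1)))).mul this
  rw [mul_one] at h3
  exact h3.symm

theorem teq_Pe_ext {N M M' : ℕ} (h : N < 2*M) (h2 : M ≤ M') : Teq N (Pe M : R⟦X⟧) (Pe M') := by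
  rw [Pe_extra h2]
  have : Teq N (∏ k ∈ Ico M M', ((1:R⟦X⟧) - X ^ (2*(k+1)))) 1 := teq_Ico_one (by omega)
  have h3 := (Teq.refl (R := R) N (Pe M)).mul this
  rw [mul_one] at h3
  exact h3.symm

theorem constantCoeff_prod_one {ι : Type*} (s : Finset ι) (f : ι → R⟦X⟧)
    (h : ∀ i ∈ s, constantCoeff (f i) = 1) : constantCoeff (R := R) (∏ i ∈ s, f i) = 1 := by
  rw [map_prod]
  exact Finset.prod_eq_one h

theorem constantCoeff_one_add_X_pow {k : ℕ} (hk : 0 < k) :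
    constantCoeff (R := R) (1 + X ^ k) = 1 := by
  simp [zero_pow hk.ne']

/-- symmetric sum splitting over `Icc (-n) n`. -/
theorem Icc_sum_split {M : Type*} [AddCommMonoid M] : ∀ (n : ℕ) (g : ℤ → M),
    ∑ j ∈ Icc (-(n:ℤ)) (n:ℤ), g j = g 0 + ∑ k ∈ range n, (g ((k:ℤ)+1) + g (-((k:ℤ)+1))) := by
  intro n
  induction n with
  | zero => intro g; simp
  | succ n ih =>
    intro g
    have hcast : ((n+1:ℕ):ℤ) = (n:ℤ)+1 := by push_cast; ring
    have hins : Icc (-((n:ℤ)+1)) ((n:ℤ)+1)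
        = insert (-((n:ℤ)+1)) (insert ((n:ℤ)+1) (Icc (-(n:ℤ)) (n:ℤ))) := by
      ext x
      simp only [mem_Icc, mem_insert]
      omega
    rw [hcast, hins, Finset.sum_insert (by simp [mem_Icc]; omega),
      Finset.sum_insert (by rw [mem_Icc]; omega), ih g, sum_range_succ]
    push_cast
    abel


open scoped Classical

local notation "S" => ZMod 4


theorem four_zero : (4 : S⟦X⟧) = 0 := by
  rw [← map_ofNat (C (R := S)) 4, show (4 : S) = 0 from by decide, map_zero]

theorem two_mul_sg (j : ℤ) : (2 : S⟦X⟧) * sg j = 2 := by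
  rcases Int.even_or_odd j with h | h
  · rw [sg, Int.negOnePow_even j h]
    push_cast
    ring
  · rw [sg, Int.negOnePow_odd j h]
    push_cast
    linear_combination (-1 : S⟦X⟧) * four_zero

noncomputable def Aser (n : ℕ) : S⟦X⟧ := ∑ k ∈ range n, X^((k+1)^2)

noncomputable def Gser (n : ℕ) : S⟦X⟧ := 1 + 2 * Aser n

theorem Th_eq_Gser (n : ℕ) : (Th n : S⟦X⟧) = Gser n := by
  rw [Th, Icc_sum_split n (fun j => sg j * X^(j.natAbs^2))]
  have h0 : (sg 0 : S⟦X⟧) * X^((0:ℤ).natAbs^2) = 1 := by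
    simp [sg, Int.negOnePow_zero]
  rw [h0, Gser, Aser, Finset.mul_sum]
  congr 1
  refine Finset.sum_congr rfl fun k hk => ?_
  have hneg : (sg (-((k:ℤ)+1)) : S⟦X⟧) = sg ((k:ℤ)+1) := by rw [sg, sg, Int.negOnePow_neg]
  have habs : ((-((k:ℤ)+1)).natAbs) = (((k:ℤ)+1).natAbs) := by rw [Int.natAbs_neg]
  have habs2 : (((k:ℤ)+1).natAbs) = k+1 := by omega
  rw [hneg, habs, habs2]
  linear_combination (X : S⟦X⟧)^((k+1)^2) * two_mul_sg ((k:ℤ)+1)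

theorem gsq (n : ℕ) : (Gser n : S⟦X⟧) * Gser n = 1 := by
  rw [Gser]
  linear_combination ((Aser n) + (Aser n)*(Aser n)) * four_zero

/-- Gauss's identity mod 4, with everything truncated at `N+1` factors. -/
theorem gauss4 (N : ℕ) : Teq N ((P1 (N+1) : S⟦X⟧) * P1 (N+1)) (Gser (N+1) * Pe (N+1)) := by
  have h1 : Teq N (P1 (N+1) : S⟦X⟧) (P1 (2*(N+1))) := teq_P1_ext (by omega) (by omega)
  have h2 := gauss (R := S) N
  rw [Th_eq_Gser] at h2
  rw [sq] at h2
  exact (h1.mul h1).trans h2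

theorem coeff_Aser (n i : ℕ) :
    coeff i (Aser n) = if ∃ j, 0 < j ∧ j ≤ n ∧ j^2 = i then 1 else 0 := by
  rw [Aser, map_sum]
  by_cases h : ∃ j, 0 < j ∧ j ≤ n ∧ j^2 = i
  · obtain ⟨j, hj0, hjn, rfl⟩ := h
    rw [if_pos ⟨j, hj0, hjn, rfl⟩]
    have hs : ∀ b ∈ range n, b ≠ j-1 → coeff (j^2) ((X:S⟦X⟧)^((b+1)^2)) = 0 := by
      intro b hb hbne
      rw [coeff_X_pow, if_neg]
      intro heq
      have : j = b+1 := Nat.pow_left_injective (by norm_num) heq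
      omega
    rw [Finset.sum_eq_single_of_mem (j-1) (Finset.mem_range.mpr (by omega)) hs,
      coeff_X_pow, show j-1+1 = j from by omega, if_pos rfl]
  · rw [if_neg h]
    refine Finset.sum_eq_zero fun k hk => ?_
    rw [Finset.mem_range] at hk
    rw [coeff_X_pow, if_neg fun heq => h ⟨k+1, by omega, by omega, heq.symm⟩]

/-- `D` function: the coefficients of `Gser * dil 3 Gser` (with a self-stabilizing cutoff). -/
noncomputable def Dfun (m : ℕ) : S := coeff m (Gser (m+1) * dil 3 (Gser (m+1)))

theorem teq_Aser_ext {N n m : ℕ} (h : N ≤ n) (h2 : n ≤ m) :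
    Teq N (Aser n) (Aser m) := by
  have hsplit : Aser m = Aser n + ∑ k ∈ Ico n m, (X:S⟦X⟧)^((k+1)^2) := by
    rw [Aser, Aser, Finset.range_eq_Ico, Finset.range_eq_Ico, ← Finset.sum_Ico_consecutive _ (Nat.zero_le n) h2]
  intro i hi
  rw [hsplit, map_add, map_sum, Finset.sum_eq_zero (fun k hk => ?_), add_zero]
  rw [Finset.mem_Ico] at hk
  rw [coeff_X_pow, if_neg]
  have : k+1 ≤ (k+1)^2 := Nat.le_self_pow (by norm_num) _
  omega

theorem teq_Gser_ext {N n m : ℕ} (h : N ≤ n) (h2 : n ≤ m) :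
    Teq N (Gser n) (Gser m) := by
  have hA := teq_Aser_ext h h2
  have := ((Teq.refl N (2 : S⟦X⟧)).mul hA)
  intro i hi
  rw [Gser, Gser, map_add, map_add, this i hi]

theorem teq_GG {N n m : ℕ} (h : N ≤ n) (h2 : n ≤ m) :
    Teq N ((Gser n : S⟦X⟧) * dil 3 (Gser n)) (Gser m * dil 3 (Gser m)) :=
  (teq_Gser_ext h h2).mul ((teq_Gser_ext h h2).dil 3 (by norm_num))

theorem Dfun_teq (N : ℕ) : Teq N (PowerSeries.mk Dfun) (Gser (N+1) * dil 3 (Gser (N+1))) := by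
  intro i hi
  rw [coeff_mk, Dfun]
  exact teq_GG (show i ≤ i+1 from by omega) (show i+1 ≤ N+1 from by omega) i (le_refl i)

theorem GG_expand (n : ℕ) : (Gser n : S⟦X⟧) * dil 3 (Gser n)
    = 1 + 2 * Aser n + 2 * dil 3 (Aser n) := by
  have hd : dil 3 (Gser n) = 1 + 2 * dil 3 (Aser n) := by
    rw [Gser, dil_add, dil_one 3 (by norm_num), two_mul (Aser n), dil_add, ← two_mul]
  rw [hd, Gser]
  linear_combination ((Aser n) * (dil 3 (Aser n))) * four_zero

theorem coeff_two_mul (f : S⟦X⟧) (i : ℕ) : coeff i (2 * f) = 2 * coeff i f := by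
  rw [show (2 : S⟦X⟧) = C (2 : S) from (map_ofNat _ 2).symm, coeff_C_mul]

theorem sq_ne_three_sq (a b : ℕ) (ha : 0 < a) (hb : 0 < b) : a^2 ≠ 3*b^2 := by
  intro h
  have h3 : (a^2).factorization 3 = (3*b^2).factorization 3 := by rw [h]
  rw [Nat.factorization_mul (by norm_num) (by positivity), Nat.factorization_pow,
    Nat.factorization_pow] at h3
  simp only [Finsupp.add_apply, Finsupp.smul_apply, smul_eq_mul,
    Nat.Prime.factorization_self (by norm_num : Nat.Prime 3)] at h3
  omega

theorem Dfun_val (n : ℕ) (hn : 1 ≤ n) :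
    ((∃ k, 0 < k ∧ (n = k^2 ∨ n = 3*k^2)) → Dfun n = 2) ∧
    ((¬ ∃ k, 0 < k ∧ (n = k^2 ∨ n = 3*k^2)) → Dfun n = 0) := by
  have hd : Dfun n = coeff n (1 + 2 * Aser (n+1) + 2 * dil 3 (Aser (n+1))) := by
    rw [Dfun, GG_expand]
  rw [map_add, map_add, coeff_two_mul, coeff_two_mul, coeff_one, if_neg (by omega),
    coeff_dil, coeff_Aser, coeff_Aser] at hd
  constructor
  · rintro ⟨k, hk, hcase | hcase⟩
    · -- n = k^2
      have hks : k ≤ k^2 := Nat.le_self_pow (by norm_num) _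
      rw [if_pos ⟨k, hk, by omega, hcase.symm⟩] at hd
      have hB : ∀ (h3 : (3:ℕ) ∣ n), ¬ ∃ j, 0 < j ∧ j ≤ n+1 ∧ j^2 = n/3 := by
        rintro h3 ⟨j, hj0, hjn, hj⟩
        obtain ⟨t, ht⟩ := h3
        exact sq_ne_three_sq k j hk hj0 (by omega)
      by_cases h3 : (3:ℕ) ∣ n
      · rw [if_pos h3, if_neg (hB h3)] at hd
        rw [hd]; ring
      · rw [if_neg h3] at hd
        rw [hd]; ring
    · -- n = 3*k^2
      have hks : k ≤ k^2 := Nat.le_self_pow (by norm_num) _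
      have hA : ¬ ∃ j, 0 < j ∧ j ≤ n+1 ∧ j^2 = n := by
        rintro ⟨j, hj0, hjn, hj⟩
        exact sq_ne_three_sq j k hj0 hk (by omega)
      rw [if_neg hA, if_pos (show (3:ℕ) ∣ n from ⟨k^2, hcase⟩),
        if_pos ⟨k, hk, by omega, by omega⟩] at hd
      rw [hd]; ring
  · intro hno
    have hA : ¬ ∃ j, 0 < j ∧ j ≤ n+1 ∧ j^2 = n := by
      rintro ⟨j, hj0, hjn, hj⟩
      exact hno ⟨j, hj0, Or.inl hj.symm⟩
    rw [if_neg hA] at hd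
    by_cases h3 : (3:ℕ) ∣ n
    · have hB : ¬ ∃ j, 0 < j ∧ j ≤ n+1 ∧ j^2 = n/3 := by
        rintro ⟨j, hj0, hjn, hj⟩
        refine hno ⟨j, hj0, Or.inr ?_⟩
        obtain ⟨t, ht⟩ := h3
        omega
      rw [if_pos h3, if_neg hB] at hd
      rw [hd]; ring
    · rw [if_neg h3] at hd
      rw [hd]; ring


theorem constantCoeff_P1 (M : ℕ) : constantCoeff (R := S) (P1 M) = 1 := by
  rw [P1]
  exact constantCoeff_prod_one _ _ fun k _ => constantCoeff_one_sub_X_pow (by omega)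

theorem constantCoeff_u (M : ℕ) :
    constantCoeff (R := S) (Q3 M * (P1 M * P3 M)) = 1 := by
  rw [map_mul, map_mul, constantCoeff_P1, Q3, P3,
    constantCoeff_prod_one _ _ (fun k _ => constantCoeff_one_add_X_pow (by omega)),
    constantCoeff_prod_one _ _ (fun k _ => constantCoeff_one_sub_X_pow (by omega))]
  ring

/-- The master congruence: `mk Dfun * P1 ≡ RHS mod (4, X^{N+1})`. -/
theorem master (N : ℕ) :
    Teq N ((PowerSeries.mk Dfun) * P1 (N+1))
      (∏ k ∈ range (N+1),
        ((1 - X^(3*(k+1))) * (1 + X^(3*k+1)) * (1 + X^(3*k+2)) : S⟦X⟧)) := by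
  set M := N + 1 with hM
  have hRHS : (∏ k ∈ range M,
      ((1 - X^(3*(k+1))) * (1 + X^(3*k+1)) * (1 + X^(3*k+2)) : S⟦X⟧))
      = P3 M * QA M * QB M := by
    rw [P3, QA, QB, ← Finset.prod_mul_distrib, ← Finset.prod_mul_distrib]
  rw [hRHS]
  have hu : IsUnit (constantCoeff (R := S) (Q3 M * (P1 M * P3 M))) := by
    rw [constantCoeff_u]; exact isUnit_one
  refine Teq.cancel hu ?_
  -- RHS side
  have e1 : (P3 M * QA M * QB M : S⟦X⟧) * (Q3 M * (P1 M * P3 M))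
      = (P3 M * P3 M) * (P1 M * Q1 (3*M)) * 1 := by
    rw [tri M]; ring
  have t1 : Teq N (P1 M : S⟦X⟧) (P1 (3*M)) := teq_P1_ext (by omega) (by omega)
  have t2 : Teq N ((P1 M : S⟦X⟧) * Q1 (3*M)) (Pe M) := by
    have := (t1.mul (Teq.refl N (Q1 (3*M) : S⟦X⟧)))
    rw [pair1 (3*M)] at this
    exact this.trans (teq_Pe_ext (by omega) (by omega)).symm
  have g3 : Teq N ((P3 M : S⟦X⟧) * P3 M) (dil 3 (Gser M) * P6 M) := by
    have hdil := (gauss4 N).dil 3 (by norm_num)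
    rw [dil_mul 3 (by norm_num), dil_mul 3 (by norm_num), ← P3_dil, ← P6_dil] at hdil
    exact hdil
  have hRside : Teq N ((P3 M * QA M * QB M : S⟦X⟧) * (Q3 M * (P1 M * P3 M)))
      ((dil 3 (Gser M) * P6 M) * Pe M) := by
    rw [e1, mul_one]
    exact g3.mul t2
  -- LHS side
  have e2 : ((PowerSeries.mk Dfun) * P1 M : S⟦X⟧) * (Q3 M * (P1 M * P3 M))
      = (PowerSeries.mk Dfun) * (P1 M * P1 M) * (P3 M * Q3 M) := by ring
  have hLside : Teq N (((PowerSeries.mk Dfun) * P1 M : S⟦X⟧) * (Q3 M * (P1 M * P3 M)))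
      ((dil 3 (Gser M) * P6 M) * Pe M) := by
    rw [e2, pair3 M, P6_dil M]
    have h1 : Teq N ((PowerSeries.mk Dfun) * (P1 M * P1 M) * (dil 3 (Pe M)) : S⟦X⟧)
        ((Gser M * dil 3 (Gser M)) * (Gser M * Pe M) * (dil 3 (Pe M))) :=
      ((Dfun_teq N).mul (gauss4 N)).mul (Teq.refl N _)
    refine h1.trans ?_
    have e3 : ((Gser M * dil 3 (Gser M)) * (Gser M * Pe M) * (dil 3 (Pe M)) : S⟦X⟧)
        = (Gser M * Gser M) * ((dil 3 (Gser M) * dil 3 (Pe M)) * Pe M) := by ring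
    rw [e3, gsq M, one_mul, ← P6_dil M]
    exact Teq.refl N _
  exact hLside.trans hRside.symm

theorem P1_int_map (M : ℕ) :
    (PowerSeries.map (Int.castRingHom S)) (∏ n ∈ Finset.range M, (1 - (X : ℤ⟦X⟧) ^ (n + 1)))
      = P1 M := by
  rw [map_prod, P1]
  refine Finset.prod_congr rfl fun k _ => ?_
  rw [map_sub, map_one, map_pow, PowerSeries.map_X]

theorem RHS_int_map (M : ℕ) :
    (PowerSeries.map (Int.castRingHom S)) (∏ n ∈ Finset.range M,
        ((1 - (X : ℤ⟦X⟧) ^ (3 * (n + 1))) * (1 + X ^ (3 * n + 1)) * (1 + X ^ (3 * n + 2))))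
      = ∏ k ∈ range M, ((1 - X^(3*(k+1))) * (1 + X^(3*k+1)) * (1 + X^(3*k+2)) : S⟦X⟧) := by
  rw [map_prod]
  refine Finset.prod_congr rfl fun k _ => ?_
  rw [map_mul, map_mul, map_sub, map_add, map_add, map_one, map_pow, map_pow, map_pow,
    PowerSeries.map_X]

theorem C_eq_Dfun (C : ℕ → ℤ)
    (hC : ∀ N : ℕ, PowerSeries.coeff N
      ((PowerSeries.mk fun n => C n) *
        ∏ n ∈ Finset.range (N + 1), (1 - (PowerSeries.X : PowerSeries ℤ) ^ (n + 1))) =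
      PowerSeries.coeff N
      (∏ n ∈ Finset.range (N + 1),
        ((1 - (PowerSeries.X : PowerSeries ℤ) ^ (3 * (n + 1))) *
          (1 + PowerSeries.X ^ (3 * n + 1)) * (1 + PowerSeries.X ^ (3 * n + 2))))) :
    ∀ n : ℕ, ((C n : ℤ) : S) = Dfun n := by
  -- mapped hypothesis
  have hS : ∀ N : ℕ, coeff N ((PowerSeries.mk fun n => ((C n : ℤ) : S)) * P1 (N+1))
      = coeff N (∏ k ∈ range (N+1),
          ((1 - X^(3*(k+1))) * (1 + X^(3*k+1)) * (1 + X^(3*k+2)) : S⟦X⟧)) := by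
    intro N
    have h1 := congrArg (Int.castRingHom S) (hC N)
    rw [show (Int.castRingHom S) (coeff N _) = coeff N ((PowerSeries.map (Int.castRingHom S))
        ((PowerSeries.mk fun n => C n) * ∏ n ∈ Finset.range (N + 1), (1 - (X : ℤ⟦X⟧) ^ (n + 1))))
      from (coeff_map _ _ _).symm,
      show (Int.castRingHom S) (coeff N (∏ n ∈ Finset.range (N + 1),
        ((1 - (X : ℤ⟦X⟧) ^ (3 * (n + 1))) * (1 + X ^ (3 * n + 1)) * (1 + X ^ (3 * n + 2)))))
        = coeff N ((PowerSeries.map (Int.castRingHom S)) (∏ n ∈ Finset.range (N + 1),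
        ((1 - (X : ℤ⟦X⟧) ^ (3 * (n + 1))) * (1 + X ^ (3 * n + 1)) * (1 + X ^ (3 * n + 2)))))
      from (coeff_map _ _ _).symm, map_mul, P1_int_map, RHS_int_map] at h1
    rw [show (PowerSeries.map (Int.castRingHom S)) (PowerSeries.mk fun n => C n)
        = PowerSeries.mk (fun n => ((C n : ℤ) : S)) from by
      ext i
      rw [coeff_map, coeff_mk, coeff_mk]
      rfl] at h1
    exact h1
  intro n
  induction n using Nat.strong_induction_on with
  | _ n ih =>
    have hmaster := master n n (le_refl n)
    have hs := hS n
    rw [← hmaster] at hs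
    rw [coeff_mul, coeff_mul, Finset.Nat.sum_antidiagonal_eq_sum_range_succ_mk,
      Finset.Nat.sum_antidiagonal_eq_sum_range_succ_mk, sum_range_succ, sum_range_succ] at hs
    have hsum : ∑ k ∈ range n, (coeff k) (PowerSeries.mk fun m => ((C m : ℤ) : S)) *
          (coeff (n - k)) (P1 (n+1))
        = ∑ k ∈ range n, (coeff k) (PowerSeries.mk Dfun) * (coeff (n - k)) (P1 (n+1)) := by
      refine Finset.sum_congr rfl fun k hk => ?_
      rw [Finset.mem_range] at hk
      rw [coeff_mk, coeff_mk, ih k hk]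
    rw [hsum] at hs
    have hlast := add_left_cancel hs
    rw [Nat.sub_self, coeff_mk, coeff_mk, coeff_zero_eq_constantCoeff, constantCoeff_P1,
      mul_one, mul_one] at hlast
    exact hlast


/-- For `n ≥ 1`: `C̄₃₁(n) ≡ 2 (mod 4)` if `n = k²` or `n = 3k²` for some positive
integer `k`, and `C̄₃₁(n) ≡ 0 (mod 4)` otherwise. -/
theorem C31_mod_four (C : ℕ → ℤ)
    (hC : ∀ N : ℕ, PowerSeries.coeff N
      ((PowerSeries.mk fun n => C n) *
        ∏ n ∈ Finset.range (N + 1), (1 - (PowerSeries.X : PowerSeries ℤ) ^ (n + 1))) =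
      PowerSeries.coeff N
      (∏ n ∈ Finset.range (N + 1),
        ((1 - (PowerSeries.X : PowerSeries ℤ) ^ (3 * (n + 1))) *
          (1 + PowerSeries.X ^ (3 * n + 1)) * (1 + PowerSeries.X ^ (3 * n + 2)))))
    (n : ℕ) (hn : 1 ≤ n) :
    ((∃ k : ℕ, 0 < k ∧ (n = k ^ 2 ∨ n = 3 * k ^ 2)) → C n ≡ 2 [ZMOD 4]) ∧
    (¬ (∃ k : ℕ, 0 < k ∧ (n = k ^ 2 ∨ n = 3 * k ^ 2)) → C n ≡ 0 [ZMOD 4]) := by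
  have hq := C_eq_Dfun C hC n
  have hval := Dfun_val n hn
  constructor
  · intro hex
    have h2 : ((C n : ℤ) : ZMod 4) = ((2 : ℤ) : ZMod 4) := by
      rw [hq, hval.1 hex]; norm_num
    have := (ZMod.intCast_eq_intCast_iff _ _ _).mp h2
    exact_mod_cast this
  · intro hnex
    have h2 : ((C n : ℤ) : ZMod 4) = ((0 : ℤ) : ZMod 4) := by
      rw [hq, hval.2 hnex]; norm_num
    have := (ZMod.intCast_eq_intCast_iff _ _ _).mp h2
    exact_mod_cast this
end

section
/- For all integers k ≥ 0 and m ≥ 0, C̄_{3,1}(2^k (6m+5)) ≡ 0 (mod 8). -/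
open Polynomial Finset

namespace C31

noncomputable def gb : ℕ → ℕ → Polynomial ℤ
  | 0, 0 => 1
  | 0, _+1 => 0
  | _+1, 0 => 1
  | n+1, k+1 => gb n k + X^(2*(k+1)) * gb n (k+1)

@[simp] lemma gb_zero_right (n : ℕ) : gb n 0 = 1 := by cases n <;> rfl

@[simp] lemma gb_zero_succ (k : ℕ) : gb 0 (k+1) = 0 := rfl

lemma gbA (n k : ℕ) : gb (n+1) (k+1) = gb n k + X^(2*(k+1)) * gb n (k+1) := rfl

lemma gb_eq_zero : ∀ {n k : ℕ}, n < k → gb n k = 0 := by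
  intro n
  induction n with
  | zero => intro k hk; match k, hk with
    | k+1, _ => rfl
  | succ n ih =>
    intro k hk
    match k, hk with
    | k+1, hk =>
      rw [gbA, ih (by omega), ih (by omega)]; ring

@[simp] lemma gb_diag : ∀ n, gb n n = 1 := by
  intro n
  induction n with
  | zero => rfl
  | succ n ih =>
    rw [gbA, ih, gb_eq_zero (by omega)]; ring

lemma gb_one (n : ℕ) : gb n 1 = ∑ i ∈ range n, (X^2 : Polynomial ℤ)^i := by
  induction n with
  | zero => rfl
  | succ n ih =>
    rw [gbA, ih, gb_zero_right, Finset.sum_range_succ' (fun i => (X^2:Polynomial ℤ)^i) n]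
    rw [Finset.mul_sum, add_comm]
    congr 1
    exact Finset.sum_congr rfl (fun i _ => by ring)

lemma pascalB : ∀ n k, gb (n+1) (k+1) = X^(2*(n-k)) * gb n k + gb n (k+1) := by
  intro n
  induction n with
  | zero =>
    intro k
    rw [gbA]
    cases k with
    | zero => simp
    | succ k => simp [gb_eq_zero (by omega : (0:ℕ) < k+1), gb_eq_zero (by omega : (0:ℕ) < k+2)]
  | succ n ih =>
    intro k
    cases k with
    | zero =>
      have L : gb (n+1+1) (0+1) = 1 + X^(2*(0+1)) * gb (n+1) (0+1) := by
        rw [gbA, gb_zero_right]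
      rw [L, gb_zero_right]
      have h := geom_sum_mul (X^2 : Polynomial ℤ) (n+1)
      rw [gb_one (n+1)]
      have hx : ((X^2 : Polynomial ℤ))^(n+1) = X^(2*(n+1-0)) := by
        rw [← pow_mul]
        norm_num
      rw [← hx]
      linear_combination h
    | succ k =>
      have L : gb (n+1+1) (k+1+1)
          = (X^(2*(n-k)) * gb n k + gb n (k+1)) + X^(2*(k+1+1)) * (X^(2*(n-(k+1))) * gb n (k+1) + gb n (k+1+1)) := by
        rw [gbA, ih k, ih (k+1)]
      have R1 : gb (n+1) (k+1) = gb n k + X^(2*(k+1)) * gb n (k+1) := gbA n k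
      have R2 : gb (n+1) (k+1+1) = gb n (k+1) + X^(2*(k+1+1)) * gb n (k+1+1) := gbA n (k+1)
      rw [L, R1, R2]
      have hnk : n + 1 - (k+1) = n - k := by omega
      rw [hnk]
      rcases le_or_gt (k+1) n with h | h
      · have hx : (X:Polynomial ℤ)^(2*(k+1+1)) * X^(2*(n-(k+1))) = X^(2*(n-k)) * X^(2*(k+1)) := by
          rw [← pow_add, ← pow_add]; congr 1; omega
        linear_combination (gb n (k+1)) * hx
      · rw [gb_eq_zero (by omega : n < k+1), gb_eq_zero (by omega : n < k+1+1)]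
        ring

lemma Xp {a b c : ℕ} (h : a + b = c) : (X:Polynomial ℤ)^a * X^b = X^c := by
  rw [← pow_add, h]

lemma gbkey (n k : ℕ) : gb (n+2) (k+2)
    = X^(2*(n-k)) * gb n k + (1 + X^(2*(n+1))) * gb n (k+1) + X^(2*(k+2)) * gb n (k+2) := by
  have L : gb (n+1+1) (k+1+1)
      = (X^(2*(n-k)) * gb n k + gb n (k+1)) + X^(2*(k+1+1)) * (X^(2*(n-(k+1))) * gb n (k+1) + gb n (k+1+1)) := by
    rw [gbA, pascalB n k, pascalB n (k+1)]
  rw [show n+2 = n+1+1 from rfl, show k+2 = k+1+1 from rfl, L]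
  rcases le_or_gt (k+1) n with h | h
  · have hx : (X:Polynomial ℤ)^(2*(k+1+1)) * X^(2*(n-(k+1))) = X^(2*(n+1)) := by
      rw [← pow_add]; congr 1; omega
    linear_combination (gb n (k+1)) * hx
  · rw [gb_eq_zero (show n < k+1 by omega)]; ring

def ee (m n : ℕ) : ℕ := (m - n)^2 + (n - m)^2

lemma ee_succ_succ (m n : ℕ) : ee (m+1) (n+1) = ee m n := by
  simp [ee, Nat.succ_sub_succ]

lemma ee_zero_left (n : ℕ) : ee 0 n = n^2 := by simp [ee]

noncomputable def cf (n m : ℕ) : Polynomial ℤ := gb (2*n) m * X^(ee m n)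

lemma cf_out {n m : ℕ} (h : 2*n < m) : cf n m = 0 := by
  simp [cf, gb_eq_zero h]

lemma gb_one_step (n : ℕ) : gb (2*n+2) 1 = X^2 * gb (2*n) 1 + (1 + X^(2*(2*n+1))) := by
  rw [gb_one, gb_one, Finset.sum_range_succ, Finset.sum_range_succ', Finset.mul_sum]
  have h1 : ∀ i ∈ range (2*n), (X^2:Polynomial ℤ) * (X^2)^i = (X^2)^(i+1) := fun i _ => by ring
  rw [Finset.sum_congr rfl h1]
  have : ((X:Polynomial ℤ)^2)^(2*n+1) = X^(2*(2*n+1)) := by rw [← pow_mul]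
  rw [this]; ring

lemma expA (n k : ℕ) (h : k ≤ 2*n) : 2*(2*n-k) + ee (k+1) n = (2*n+1) + ee k n := by
  rcases le_or_gt (k+1) n with h1 | h1
  · have e1 : ee (k+1) n = (n-(k+1))^2 := by
      simp [ee, Nat.sub_eq_zero_of_le h1]
    have e2 : ee k n = (n-k)^2 := by
      simp [ee, Nat.sub_eq_zero_of_le (by omega : k ≤ n)]
    rw [e1, e2]; zify [h, h1, (by omega : k ≤ n)]; ring
  · have e1 : ee (k+1) n = (k+1-n)^2 := by
      simp [ee, Nat.sub_eq_zero_of_le (by omega : n ≤ k+1)]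
    rcases le_or_gt n k with h2 | h2
    · have e2 : ee k n = (k-n)^2 := by
        simp [ee, Nat.sub_eq_zero_of_le h2]
      rw [e1, e2]; zify [h, h2, (by omega : n ≤ k+1)]; ring
    · have hn : n = k+1 := by omega
      subst hn
      have e1' : ee (k+1) (k+1) = 0 := by simp [ee]
      have e2 : ee k (k+1) = 1 := by simp [ee, Nat.succ_sub_succ, (by omega : k+1-k = 1)]
      rw [e1', e2]; omega

lemma expC (n k : ℕ) : 2*(k+2) + ee (k+1) n = (2*n+1) + ee (k+2) n := by
  rcases le_or_gt (k+1) n with h1 | h1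
  · have e1 : ee (k+1) n = (n-(k+1))^2 := by
      simp [ee, Nat.sub_eq_zero_of_le h1]
    rcases le_or_gt (k+2) n with h2 | h2
    · have e2 : ee (k+2) n = (n-(k+2))^2 := by
        simp [ee, Nat.sub_eq_zero_of_le h2]
      rw [e1, e2]; zify [h1, h2]; ring
    · have hn : n = k+1 := by omega
      subst hn
      have e1' : ee (k+1) (k+1) = 0 := by simp [ee]
      have e2 : ee (k+2) (k+1) = 1 := by
        simp [ee, Nat.succ_sub_succ, (by omega : k+2-(k+1) = 1), Nat.sub_eq_zero_of_le (by omega : k+1 ≤ k+2)]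
      rw [e1', e2]; omega
  · have e1 : ee (k+1) n = (k+1-n)^2 := by
      simp [ee, Nat.sub_eq_zero_of_le (by omega : n ≤ k+1)]
    have e2 : ee (k+2) n = (k+2-n)^2 := by
      simp [ee, Nat.sub_eq_zero_of_le (by omega : n ≤ k+2)]
    rw [e1, e2]; zify [(by omega : n ≤ k+1), (by omega : n ≤ k+2)]; ring

lemma cf_step (n d : ℕ) :
    cf (n+1) d = X^(2*n+1) * cf n d
      + (1 + X^(2*(2*n+1))) * (if d = 0 then 0 else cf n (d-1))
      + X^(2*n+1) * (if d ≤ 1 then 0 else cf n (d-2)) := by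
  have h2 : 2*(n+1) = 2*n+2 := by ring
  match d with
  | 0 =>
    unfold cf
    rw [h2, gb_zero_right, gb_zero_right, ee_zero_left, ee_zero_left,
      if_pos rfl, if_pos (by omega : (0:ℕ) ≤ 1), one_mul, one_mul,
      Xp (show (2*n+1) + n^2 = (n+1)^2 by ring)]
    ring
  | 1 =>
    simp only [if_neg (by omega : (1:ℕ) ≠ 0), if_pos (le_refl 1)]
    unfold cf
    rw [h2, gb_one_step n, gb_zero_right]
    have hB : ee 1 (n+1) = ee 0 n := ee_succ_succ 0 n
    rw [hB, ee_zero_left]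
    have h1 : (2*n+1) + ee 1 n = 2 + n^2 := by
      match n with
      | 0 => simp [ee]
      | m+1 =>
        have e1 : ee 1 (m+1) = m^2 := by
          rw [show (1:ℕ) = 0+1 from rfl, ee_succ_succ, ee_zero_left]
        rw [e1]; have : (m+1)^2 = m^2+2*m+1 := by ring
        omega
    have hx : (X:Polynomial ℤ)^2 * X^(n^2) = X^(2*n+1) * X^(ee 1 n) := by
      rw [← pow_add, ← pow_add, h1]
    linear_combination (gb (2*n) 1) * hx
  | (k+2) =>
    simp only [if_neg (by omega : k+2 ≠ 0), if_neg (by omega : ¬ (k+2 ≤ 1))]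
    rcases le_or_gt k (2*n) with hk | hk
    · unfold cf
      rw [h2, gbkey (2*n) k]
      have hB : ee (k+2) (n+1) = ee (k+1) n := ee_succ_succ (k+1) n
      rw [hB]
      simp only [Nat.add_sub_cancel, show k+2-2 = k from by omega, show k+1+1-1 = k+1 from by omega,
        show k+2-1 = k+1 from by omega]
      have hxA : (X:Polynomial ℤ)^(2*(2*n-k)) * X^(ee (k+1) n) = X^(2*n+1) * X^(ee k n) := by
        rw [← pow_add, ← pow_add, expA n k hk]
      have hxC : (X:Polynomial ℤ)^(2*(k+2)) * X^(ee (k+1) n) = X^(2*n+1) * X^(ee (k+2) n) := by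
        rw [← pow_add, ← pow_add, expC n k]
      linear_combination (gb (2*n) k) * hxA + (gb (2*n) (k+2)) * hxC
    · rw [cf_out (by omega : 2*(n+1) < k+2), cf_out (by omega : 2*n < k+2),
        cf_out (show 2*n < k+2-1 by omega), cf_out (show 2*n < k+2-2 by omega)]
      ring

noncomputable def Phi (n : ℕ) : Polynomial ℤ := ∑ m ∈ range (2*n+1), (-1)^m * cf n m

lemma Phi_ext (n R : ℕ) (h : 2*n+1 ≤ R) : Phi n = ∑ m ∈ range R, (-1)^m * cf n m := by
  unfold Phi
  refine Finset.sum_subset ?_ ?_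
  · exact Finset.range_subset_range.2 h
  · intro x _ hx
    rw [cf_out (by simp at hx; omega)]
    ring

lemma Phi_succ (n : ℕ) :
    Phi (n+1) = (2 * X^(2*n+1) - 1 - X^(2*(2*n+1))) * Phi n := by
  have key : Phi (n+1) = ∑ m ∈ range (2*n+3), (-1)^m * cf (n+1) m := by
    rw [Phi_ext (n+1) (2*n+3) (by omega)]
  rw [key]
  have expand : ∀ m ∈ range (2*n+3), (-1:Polynomial ℤ)^m * cf (n+1) m
      = (-1)^m * (X^(2*n+1) * cf n m)
        + (-1)^m * ((1 + X^(2*(2*n+1))) * (if m = 0 then 0 else cf n (m-1)))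
        + (-1)^m * (X^(2*n+1) * (if m ≤ 1 then 0 else cf n (m-2))) := by
    intro m _
    rw [cf_step n m]; ring
  rw [Finset.sum_congr rfl expand, Finset.sum_add_distrib, Finset.sum_add_distrib]
  have S1 : ∑ m ∈ range (2*n+3), (-1:Polynomial ℤ)^m * (X^(2*n+1) * cf n m)
      = X^(2*n+1) * Phi n := by
    rw [Phi_ext n (2*n+3) (by omega), Finset.mul_sum]
    exact Finset.sum_congr rfl (fun m _ => by ring)
  have S2 : ∑ m ∈ range (2*n+3), (-1:Polynomial ℤ)^m * ((1 + X^(2*(2*n+1))) * (if m = 0 then 0 else cf n (m-1)))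
      = -((1 + X^(2*(2*n+1))) * Phi n) := by
    rw [Finset.sum_range_succ' _ (2*n+2)]
    have base : (-1:Polynomial ℤ)^0 * ((1 + X^(2*(2*n+1))) * (if (0:ℕ) = 0 then 0 else cf n (0-1))) = 0 := by
      rw [if_pos rfl]; ring
    rw [base, add_zero, Phi_ext n (2*n+2) (by omega)]
    have rhs : -((1 + X^(2*(2*n+1))) * ∑ m ∈ range (2*n+2), (-1:Polynomial ℤ)^m * cf n m)
        = ∑ m ∈ range (2*n+2), (-1:Polynomial ℤ)^(m+1) * ((1 + X^(2*(2*n+1))) * cf n m) := by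
      rw [Finset.mul_sum, ← Finset.sum_neg_distrib]
      exact Finset.sum_congr rfl (fun m _ => by ring)
    rw [rhs]
    refine Finset.sum_congr rfl fun m _ => ?_
    rw [if_neg (Nat.succ_ne_zero m), Nat.add_sub_cancel]
  have S3 : ∑ m ∈ range (2*n+3), (-1:Polynomial ℤ)^m * (X^(2*n+1) * (if m ≤ 1 then 0 else cf n (m-2)))
      = X^(2*n+1) * Phi n := by
    rw [Finset.sum_range_succ' _ (2*n+2), Finset.sum_range_succ' _ (2*n+1)]
    have base0 : (-1:Polynomial ℤ)^0 * (X^(2*n+1) * (if (0:ℕ) ≤ 1 then 0 else cf n (0-2))) = 0 := by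
      rw [if_pos (by omega)]; ring
    have base1 : (-1:Polynomial ℤ)^(0+1) * (X^(2*n+1) * (if (0+1:ℕ) ≤ 1 then 0 else cf n (0+1-2))) = 0 := by
      rw [if_pos (by omega)]; ring
    rw [base0, base1, add_zero, add_zero, Phi_ext n (2*n+1) (by omega), Finset.mul_sum]
    refine Finset.sum_congr rfl fun m _ => ?_
    rw [if_neg (by omega : ¬ (m+1+1 ≤ 1)), show m+1+1-2 = m from by omega]
    ring
  rw [S1, S2, S3]
  ring

lemma Phi_closed (n : ℕ) :
    Phi n = (-1)^n * (∏ j ∈ range n, (1 - X^(2*j+1)))^2 := by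
  induction n with
  | zero =>
    show ∑ m ∈ range 1, _ = _
    simp [cf, ee]
  | succ n ih =>
    rw [Phi_succ, ih, Finset.prod_range_succ]
    have : (X:Polynomial ℤ)^(2*(2*n+1)) = (X^(2*n+1))^2 := by rw [← pow_mul]; ring_nf
    rw [this]
    ring

lemma prod_sub_one_dvd {R : Type*} [CommRing R] (x : R) (s : Finset ℕ) (f : ℕ → R)
    (h : ∀ i ∈ s, x ∣ f i - 1) : x ∣ (∏ i ∈ s, f i) - 1 := by
  classical
  revert h
  induction s using Finset.induction_on with
  | empty => intro h; simp
  | @insert a s' hna ih =>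
    intro h
    rw [Finset.prod_insert hna]
    have h1 : x ∣ f a - 1 := h a (Finset.mem_insert_self a s')
    have h2 : x ∣ (∏ i ∈ s', f i) - 1 := ih (fun i hi => h i (Finset.mem_insert_of_mem hi))
    have : f a * (∏ i ∈ s', f i) - 1
        = f a * ((∏ i ∈ s', f i) - 1) + (f a - 1) := by ring
    rw [this]
    exact dvd_add (Dvd.dvd.mul_left h2 _) h1

noncomputable def Wd (m : ℕ) : Polynomial ℤ := ∏ j ∈ range m, (1 - X^(2*(j+1)))

lemma Wd_ne_zero (m : ℕ) : Wd m ≠ 0 := by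
  unfold Wd
  apply Finset.prod_ne_zero_iff.2
  intro j _
  intro hz
  have := congrArg (fun p => Polynomial.coeff p 0) hz
  simp [Polynomial.coeff_one, Polynomial.coeff_X_pow] at this

lemma pf : ∀ n : ℕ, ∀ k ≤ n, gb n k * Wd k * Wd (n-k) = Wd n := by
  intro n
  induction n with
  | zero =>
    intro k hk
    interval_cases k
    simp [Wd]
  | succ n ih =>
    intro k hk
    cases k with
    | zero =>
      simp only [gb_zero_right, Nat.sub_zero]
      unfold Wd
      simp
    | succ k =>
      rw [gbA]
      have hW : Wd (k+1) = Wd k * (1 - X^(2*(k+1))) := by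
        unfold Wd; rw [Finset.prod_range_succ]
      rcases le_or_gt (k+1) n with h1 | h1
      · have hW2 : Wd (n-k) = Wd (n-(k+1)) * (1 - X^(2*(n-k))) := by
          unfold Wd
          rw [show n-k = (n-(k+1))+1 from by omega, Finset.prod_range_succ,
            show n-(k+1)+1 = n-k from by omega]
        have ih1 := ih k (by omega)
        have ih2 := ih (k+1) h1
        have hQ : (X:Polynomial ℤ)^(2*(k+1)) * X^(2*(n-k)) = X^(2*(n+1)) := by
          rw [← pow_add]; congr 1; omega
        have hsub : n+1-(k+1) = n-k := by omega
        have hWn1 : Wd (n+1) = Wd n * (1 - X^(2*(n+1))) := by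
          unfold Wd; rw [Finset.prod_range_succ]
        rw [hsub, hWn1, hW, hW2]
        rw [hW2] at ih1
        rw [hW] at ih2
        linear_combination (1 - X^(2*(k+1))) * ih1 + X^(2*(k+1)) * (1 - X^(2*(n-k))) * ih2 - Wd n * hQ
      · have hkn : k = n := by omega
        subst hkn
        rw [gb_eq_zero (by omega : k < k+1), gb_diag, Nat.sub_self]
        have h0 : Wd 0 = 1 := by unfold Wd; simp
        rw [h0]
        ring

lemma Wd_split (a b : ℕ) : Wd (a+b) = Wd a * ∏ j ∈ range b, (1 - X^(2*(a+j+1))) := by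
  unfold Wd
  rw [Finset.prod_range_add]

lemma dvd_one_sub_prod {D : ℕ} {s : Finset ℕ} {e : ℕ → ℕ} (h : ∀ j ∈ s, D ≤ e j) :
    (X:Polynomial ℤ)^D ∣ (∏ j ∈ s, (1 - X^(e j))) - 1 := by
  apply prod_sub_one_dvd
  intro i hi
  have : (1:Polynomial ℤ) - X^(e i) - 1 = -X^(e i) := by ring
  rw [this, dvd_neg]
  exact pow_dvd_pow X (h i hi)

lemma dvd_mul_one_sub {D : ℕ} {a b : Polynomial ℤ}
    (ha : (X:Polynomial ℤ)^D ∣ a - 1) (hb : (X:Polynomial ℤ)^D ∣ b - 1) :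
    (X:Polynomial ℤ)^D ∣ a * b - 1 := by
  have : a * b - 1 = a * (b - 1) + (a - 1) := by ring
  rw [this]
  exact dvd_add (Dvd.dvd.mul_left hb a) ha

lemma gb_Wd (n m : ℕ) (hm : m ≤ 2*n) :
    (X:Polynomial ℤ)^(2*((n - (m-n) - (n-m)) + 1)) ∣ gb (2*n) m * Wd n - 1 := by
  have hpf := pf (2*n) m hm
  rcases le_or_gt m n with hc | hc
  · have hmn' : n - (m-n) - (n-m) = m := by omega
    rw [hmn']
    have hsplit : Wd (2*n) = Wd (2*n-m) * ∏ j ∈ range m, (1 - X^(2*((2*n-m)+j+1))) := by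
      have h := Wd_split (2*n-m) m
      rw [show (2*n-m)+m = 2*n from by omega] at h
      exact h
    have hcancel : gb (2*n) m * Wd m = ∏ j ∈ range m, (1 - X^(2*((2*n-m)+j+1))) := by
      apply mul_left_cancel₀ (Wd_ne_zero (2*n-m))
      calc Wd (2*n-m) * (gb (2*n) m * Wd m)
          = gb (2*n) m * Wd m * Wd (2*n-m) := by ring
        _ = Wd (2*n) := hpf
        _ = _ := hsplit
    have hWn : Wd n = Wd m * ∏ j ∈ range (n-m), (1 - X^(2*(m+j+1))) := by
      have h := Wd_split m (n-m)
      rw [show m+(n-m) = n from by omega] at h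
      exact h
    have key : gb (2*n) m * Wd n
        = (∏ j ∈ range m, (1 - X^(2*((2*n-m)+j+1)))) * ∏ j ∈ range (n-m), (1 - X^(2*(m+j+1))) := by
      rw [hWn, ← hcancel]; ring
    rw [key]
    apply dvd_mul_one_sub
    · exact dvd_one_sub_prod (fun j _ => by omega)
    · exact dvd_one_sub_prod (fun j _ => by omega)
  · have hmn' : n - (m-n) - (n-m) = 2*n-m := by omega
    rw [hmn']
    have hsplit : Wd (2*n) = Wd m * ∏ j ∈ range (2*n-m), (1 - X^(2*(m+j+1))) := by
      have h := Wd_split m (2*n-m)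
      rw [show m+(2*n-m) = 2*n from by omega] at h
      exact h
    have hcancel : gb (2*n) m * Wd (2*n-m) = ∏ j ∈ range (2*n-m), (1 - X^(2*(m+j+1))) := by
      apply mul_left_cancel₀ (Wd_ne_zero m)
      calc Wd m * (gb (2*n) m * Wd (2*n-m))
          = gb (2*n) m * Wd m * Wd (2*n-m) := by ring
        _ = Wd (2*n) := hpf
        _ = _ := hsplit
    have hWn : Wd n = Wd (2*n-m) * ∏ j ∈ range (m-n), (1 - X^(2*((2*n-m)+j+1))) := by
      have h := Wd_split (2*n-m) (m-n)
      rw [show (2*n-m)+(m-n) = n from by omega] at h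
      exact h
    have key : gb (2*n) m * Wd n
        = (∏ j ∈ range (2*n-m), (1 - X^(2*(m+j+1)))) * ∏ j ∈ range (m-n), (1 - X^(2*((2*n-m)+j+1))) := by
      rw [hWn, ← hcancel]; ring
    rw [key]
    apply dvd_mul_one_sub
    · exact dvd_one_sub_prod (fun j _ => by omega)
    · exact dvd_one_sub_prod (fun j _ => by omega)

lemma interleave (n : ℕ) : ∏ j ∈ range (2*n), (1 - (X:Polynomial ℤ)^(j+1))
    = (∏ j ∈ range n, (1 - X^(2*j+1))) * Wd n := by
  induction n with
  | zero => simp [Wd]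
  | succ n ih =>
    have h2 : 2*(n+1) = 2*n+1+1 := by ring
    rw [h2, Finset.prod_range_succ, Finset.prod_range_succ, ih, Finset.prod_range_succ]
    unfold Wd
    rw [Finset.prod_range_succ]
    have : 2*n+1+1 = 2*(n+1) := by ring
    rw [this]
    ring

lemma ee_sym_left {m n : ℕ} (h : m ≤ n) : ee m n = (n-m)^2 := by
  simp [ee, Nat.sub_eq_zero_of_le h]

lemma ee_sym_right {m n : ℕ} (h : n ≤ m) : ee m n = (m-n)^2 := by
  simp [ee, Nat.sub_eq_zero_of_le h]

lemma theta_form (n : ℕ) :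
    ∑ m ∈ range (2*n+1), (-1:Polynomial ℤ)^(m+n) * X^(ee m n)
      = 1 + ∑ k ∈ range n, 2 * (-1)^(k+1) * X^((k+1)^2) := by
  rw [show 2*n+1 = n+(n+1) from by omega, Finset.sum_range_add]
  have hupper : ∑ x ∈ range (n+1), (-1:Polynomial ℤ)^((n+x)+n) * X^(ee (n+x) n)
      = 1 + ∑ k ∈ range n, (-1)^(k+1) * X^((k+1)^2) := by
    have hterm : ∀ x ∈ range (n+1), (-1:Polynomial ℤ)^((n+x)+n) * X^(ee (n+x) n)
        = (-1)^x * X^(x^2) := by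
      intro x _
      have he : ee (n+x) n = x^2 := by
        rw [ee_sym_right (Nat.le_add_right n x)]
        congr 1
        omega
      have hs : (-1:Polynomial ℤ)^((n+x)+n) = (-1)^x := by
        rw [show (n+x)+n = 2*n+x from by omega, pow_add, pow_mul]
        norm_num
      rw [he, hs]
    rw [Finset.sum_congr rfl hterm, Finset.sum_range_succ' _ n, add_comm]
    norm_num
  have hlower : ∑ x ∈ range n, (-1:Polynomial ℤ)^(x+n) * X^(ee x n)
      = ∑ k ∈ range n, (-1)^(k+1) * X^((k+1)^2) := by
    rw [← Finset.sum_range_reflect]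
    refine Finset.sum_congr rfl fun j hj => ?_
    have hjn : j < n := Finset.mem_range.1 hj
    have he : ee (n-1-j) n = (j+1)^2 := by
      rw [ee_sym_left (by omega)]
      congr 1
      omega
    have hs : (-1:Polynomial ℤ)^((n-1-j)+n) = (-1)^(j+1) := by
      rcases Nat.even_or_odd j with hj2 | hj2
      · have h1 : Odd ((n-1-j)+n) := by
          rw [Nat.odd_iff]
          have := Nat.even_iff.1 hj2
          omega
        have h2 : Odd (j+1) := by
          rw [Nat.odd_iff]
          have := Nat.even_iff.1 hj2
          omega
        rw [h1.neg_one_pow, h2.neg_one_pow]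
      · have h1 : Even ((n-1-j)+n) := by
          rw [Nat.even_iff]
          have := Nat.odd_iff.1 hj2
          omega
        have h2 : Even (j+1) := by
          rw [Nat.even_iff]
          have := Nat.odd_iff.1 hj2
          omega
        rw [h1.neg_one_pow, h2.neg_one_pow]
    rw [he, hs]
  rw [hupper, hlower]
  rw [show (1 + ∑ k ∈ range n, 2 * (-1:Polynomial ℤ)^(k+1) * X^((k+1)^2))
      = 1 + (∑ k ∈ range n, (-1:Polynomial ℤ)^(k+1) * X^((k+1)^2)
          + ∑ k ∈ range n, (-1:Polynomial ℤ)^(k+1) * X^((k+1)^2)) from by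
    rw [← Finset.sum_add_distrib]
    congr 1
    exact Finset.sum_congr rfl fun k _ => by ring]
  ring

lemma eebound (n m : ℕ) (hm : m ≤ 2*n) :
    n ≤ ee m n + 2*((n - (m-n) - (n-m))+1) := by
  rcases le_or_gt m n with hc | hc
  · rw [ee_sym_left hc]
    have h1 : n - (m-n) - (n-m) = m := by omega
    rw [h1]
    rcases le_or_gt (n-m) 1 with h2 | h2
    · omega
    · have h3 : (n-m)^2 ≥ 2*(n-m) := by
        have := Nat.mul_le_mul_right (n-m) h2
        calc 2*(n-m) ≤ (n-m)*(n-m) := by nlinarith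
        _ = (n-m)^2 := by ring
      omega
  · rw [ee_sym_right (le_of_lt hc)]
    have h1 : n - (m-n) - (n-m) = n - (m-n) := by omega
    rw [h1]
    rcases le_or_gt (m-n) 1 with h2 | h2
    · omega
    · have h3 : (m-n)^2 ≥ 2*(m-n) := by
        calc 2*(m-n) ≤ (m-n)*(m-n) := by nlinarith
        _ = (m-n)^2 := by ring
      omega

theorem gaussPoly (N : ℕ) :
    (X:Polynomial ℤ)^(N+1) ∣ (∏ j ∈ range (2*(N+1)), (1 - X^(j+1)))^2
      - (1 + ∑ k ∈ range (N+1), 2 * (-1:Polynomial ℤ)^(k+1) * X^((k+1)^2)) * Wd (2*(N+1)) := by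
  set n := N+1 with hn
  set Th : Polynomial ℤ := 1 + ∑ k ∈ range n, 2 * (-1:Polynomial ℤ)^(k+1) * X^((k+1)^2) with hTh
  have hodd : (∏ j ∈ range n, (1 - (X:Polynomial ℤ)^(2*j+1)))^2 = (-1)^n * Phi n := by
    have h := Phi_closed n
    have h2 : ((-1:Polynomial ℤ)^n)^2 = 1 := by
      rw [← pow_mul, mul_comm, pow_mul]
      norm_num
    linear_combination (-((-1:Polynomial ℤ)^n)) * h - ((∏ j ∈ range n, (1 - (X:Polynomial ℤ)^(2*j+1)))^2) * h2
  have key : (X:Polynomial ℤ)^(N+1) ∣ ((-1)^n * Phi n) * Wd n - Th := by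
    rw [hTh, ← theta_form n]
    unfold Phi
    rw [show ((-1:Polynomial ℤ)^n * ∑ m ∈ range (2*n+1), (-1)^m * cf n m) * Wd n
        = ∑ m ∈ range (2*n+1), (-1:Polynomial ℤ)^n * ((-1)^m * cf n m) * Wd n from by
      rw [Finset.mul_sum, Finset.sum_mul]]
    rw [← Finset.sum_sub_distrib]
    apply Finset.dvd_sum
    intro m hm
    have hm2 : m ≤ 2*n := by
      have := Finset.mem_range.1 hm
      omega
    obtain ⟨u, hu⟩ := gb_Wd n m hm2
    have hterm : (-1:Polynomial ℤ)^n * ((-1)^m * cf n m) * Wd n - (-1)^(m+n) * X^(ee m n)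
        = (-1)^(m+n) * (X^(ee m n) * (gb (2*n) m * Wd n - 1)) := by
      unfold cf
      rw [pow_add]
      ring
    rw [hterm, hu]
    have hdvd : (X:Polynomial ℤ)^(N+1) ∣ X^(ee m n) * X^(2*((n - (m-n) - (n-m))+1)) := by
      rw [← pow_add]
      apply pow_dvd_pow
      have := eebound n m hm2
      omega
    have hshape : (-1:Polynomial ℤ)^(m+n) * (X^(ee m n) * (X^(2*((n - (m-n) - (n-m))+1)) * u))
        = (X^(ee m n) * X^(2*((n - (m-n) - (n-m))+1))) * ((-1)^(m+n) * u) := by ring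
    rw [hshape]
    exact hdvd.mul_right _
  have htail : (X:Polynomial ℤ)^(N+1) ∣ Th * Wd n - Th * Wd (2*n) := by
    have hsplit : Wd (2*n) = Wd n * ∏ j ∈ range n, (1 - (X:Polynomial ℤ)^(2*(n+j+1))) := by
      have h := Wd_split n n
      rw [show n+n = 2*n from by omega] at h
      exact h
    have hp : (X:Polynomial ℤ)^(N+1) ∣ (∏ j ∈ range n, (1 - (X:Polynomial ℤ)^(2*(n+j+1)))) - 1 :=
      dvd_one_sub_prod (fun j _ => by omega)
    have : Th * Wd n - Th * Wd (2*n)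
        = -(Th * Wd n) * ((∏ j ∈ range n, (1 - (X:Polynomial ℤ)^(2*(n+j+1)))) - 1) := by
      rw [hsplit]; ring
    rw [this]
    exact Dvd.dvd.mul_left hp _
  have hfull : (∏ j ∈ range (2*n), (1 - (X:Polynomial ℤ)^(j+1)))^2
      = (((-1)^n * Phi n) * Wd n) * Wd n := by
    rw [interleave, mul_pow, hodd]
    ring
  have decomp : (∏ j ∈ range (2*n), (1 - (X:Polynomial ℤ)^(j+1)))^2 - Th * Wd (2*n)
      = (((-1)^n * Phi n) * Wd n - Th) * Wd n + (Th * Wd n - Th * Wd (2*n)) := by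
    rw [hfull]; ring
  rw [decomp]
  exact dvd_add (Dvd.dvd.mul_right key _) htail

section Series
open PowerSeries

lemma gmul_one_sub {R : Type*} [CommRing R] {x a b : R} (ha : x ∣ a - 1) (hb : x ∣ b - 1) :
    x ∣ a * b - 1 := by
  have : a * b - 1 = a * (b - 1) + (a - 1) := by ring
  rw [this]
  exact dvd_add (Dvd.dvd.mul_left hb a) ha

lemma cmul {R : Type*} [CommRing R] {x a b c e : R} (h1 : x ∣ a - b) (h2 : x ∣ c - e) :
    x ∣ a * c - b * e := by
  have : a * c - b * e = a * (c - e) + (a - b) * e := by ring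
  rw [this]
  exact dvd_add (Dvd.dvd.mul_left h2 a) (Dvd.dvd.mul_right h1 e)

lemma cmulr {R : Type*} [CommRing R] {x a b : R} (c : R) (h1 : x ∣ a - b) :
    x ∣ a * c - b * c := cmul h1 (by simp)

lemma ccancel {R : Type*} [CommRing R] {x a b U : R} (hU : IsUnit U) (h : x ∣ (a - b) * U) :
    x ∣ a - b := by
  obtain ⟨u, rfl⟩ := hU
  have h2 := Dvd.dvd.mul_right h ((u⁻¹ : Rˣ) : R)
  rwa [mul_assoc, Units.mul_inv, mul_one] at h2

lemma prod_tail {R : Type*} [CommRing R] {x : R} {M M' : ℕ} (h : M ≤ M') (f : ℕ → R)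
    (hf : ∀ j, M ≤ j → x ∣ f j - 1) :
    x ∣ (∏ j ∈ range M', f j) - (∏ j ∈ range M, f j) := by
  rw [show M' = M + (M'-M) from by omega, Finset.prod_range_add]
  have : (∏ j ∈ range M, f j) * (∏ j ∈ range (M'-M), f (M+j)) - (∏ j ∈ range M, f j)
      = (∏ j ∈ range M, f j) * ((∏ j ∈ range (M'-M), f (M+j)) - 1) := by ring
  rw [this]
  exact Dvd.dvd.mul_left (prod_sub_one_dvd x _ _ (fun i _ => hf (M+i) (by omega))) _

lemma xm (e D : ℕ) (h : D ≤ e) : (X:PowerSeries ℤ)^D ∣ (1 - (X:PowerSeries ℤ)^e) - 1 := by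
  have : (1 - (X:PowerSeries ℤ)^e) - 1 = -(X:PowerSeries ℤ)^e := by ring
  rw [this, dvd_neg]
  exact pow_dvd_pow (X:PowerSeries ℤ) h

lemma xp (e D : ℕ) (h : D ≤ e) : (X:PowerSeries ℤ)^D ∣ (1 + (X:PowerSeries ℤ)^e) - 1 := by
  have : (1 + (X:PowerSeries ℤ)^e) - 1 = (X:PowerSeries ℤ)^e := by ring
  rw [this]
  exact pow_dvd_pow (X:PowerSeries ℤ) h

noncomputable def PA (t N : ℕ) : PowerSeries ℤ := ∏ j ∈ range (N+1), (1 - (X : PowerSeries ℤ)^(t*(j+1)))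
noncomputable def PB1 (N : ℕ) : PowerSeries ℤ := ∏ j ∈ range (N+1), (1 + (X:PowerSeries ℤ)^(3*j+1))
noncomputable def PB2 (N : ℕ) : PowerSeries ℤ := ∏ j ∈ range (N+1), (1 + (X:PowerSeries ℤ)^(3*j+2))
noncomputable def PB3 (N : ℕ) : PowerSeries ℤ := ∏ j ∈ range (N+1), (1 + (X:PowerSeries ℤ)^(3*(j+1)))
noncomputable def PBf (N : ℕ) : PowerSeries ℤ := ∏ j ∈ range (N+1), (1 + (X:PowerSeries ℤ)^(j+1))

lemma coeff_of_dvd {R : Type*} [CommRing R] {N i : ℕ} {a b : PowerSeries R}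
    (h : (X:PowerSeries R)^(N+1) ∣ a - b)
    (hi : i < N+1) : PowerSeries.coeff i a = PowerSeries.coeff i b := by
  have := (PowerSeries.X_pow_dvd_iff.1 h) i hi
  rw [map_sub, sub_eq_zero] at this
  exact this

lemma step1 (C : ℕ → ℤ)
    (hC : ∀ N : ℕ, PowerSeries.coeff N
      ((PowerSeries.mk fun n => C n) *
        ∏ n ∈ Finset.range (N + 1), (1 - (PowerSeries.X : PowerSeries ℤ) ^ (n + 1))) =
      PowerSeries.coeff N
      (∏ n ∈ Finset.range (N + 1),
        ((1 - (PowerSeries.X : PowerSeries ℤ) ^ (3 * (n + 1))) *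
          (1 + PowerSeries.X ^ (3 * n + 1)) * (1 + PowerSeries.X ^ (3 * n + 2)))))
    (N : ℕ) :
    (X:PowerSeries ℤ)^(N+1) ∣ (PowerSeries.mk fun n => C n) * PA 1 N - PA 3 N * PB1 N * PB2 N := by
  rw [PowerSeries.X_pow_dvd_iff]
  intro i hi
  rw [map_sub, sub_eq_zero]
  have hA : PowerSeries.coeff i ((PowerSeries.mk fun n => C n) * PA 1 N)
      = PowerSeries.coeff i ((PowerSeries.mk fun n => C n) *
          ∏ n ∈ Finset.range (i + 1), (1 - (PowerSeries.X : PowerSeries ℤ) ^ (n + 1))) := by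
    apply coeff_of_dvd (N := i) _ (by omega)
    have hdiff : (X:PowerSeries ℤ)^(i+1) ∣ PA 1 N - ∏ n ∈ Finset.range (i + 1), (1 - (PowerSeries.X : PowerSeries ℤ) ^ (n + 1)) := by
      unfold PA
      have h := prod_tail (x := (X:PowerSeries ℤ)^(i+1)) (show i+1 ≤ N+1 from by omega)
        (fun j => 1 - (X:PowerSeries ℤ)^(1*(j+1))) (fun j hj => xm _ _ (by omega))
      have hcong : ∏ n ∈ Finset.range (i + 1), (1 - (PowerSeries.X : PowerSeries ℤ) ^ (n + 1))
          = ∏ n ∈ Finset.range (i + 1), (1 - (PowerSeries.X : PowerSeries ℤ) ^ (1*(n + 1))) := by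
        exact Finset.prod_congr rfl (fun j _ => by rw [one_mul])
      rw [hcong]
      exact h
    have : (PowerSeries.mk fun n => C n) * PA 1 N -
        (PowerSeries.mk fun n => C n) * ∏ n ∈ Finset.range (i + 1), (1 - (PowerSeries.X : PowerSeries ℤ) ^ (n + 1))
        = (PA 1 N - ∏ n ∈ Finset.range (i + 1), (1 - (PowerSeries.X : PowerSeries ℤ) ^ (n + 1))) * (PowerSeries.mk fun n => C n) := by
      ring
    rw [this]
    exact Dvd.dvd.mul_right hdiff _
  have hB : PowerSeries.coeff i (PA 3 N * PB1 N * PB2 N)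
      = PowerSeries.coeff i (∏ n ∈ Finset.range (i + 1),
        ((1 - (PowerSeries.X : PowerSeries ℤ) ^ (3 * (n + 1))) *
          (1 + PowerSeries.X ^ (3 * n + 1)) * (1 + PowerSeries.X ^ (3 * n + 2)))) := by
    apply coeff_of_dvd (N := i) _ (by omega)
    have heq : PA 3 N * PB1 N * PB2 N = ∏ n ∈ Finset.range (N + 1),
        ((1 - (PowerSeries.X : PowerSeries ℤ) ^ (3 * (n + 1))) *
          (1 + PowerSeries.X ^ (3 * n + 1)) * (1 + PowerSeries.X ^ (3 * n + 2))) := by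
      unfold PA PB1 PB2
      rw [← Finset.prod_mul_distrib, ← Finset.prod_mul_distrib]
    rw [heq]
    exact prod_tail (show i+1 ≤ N+1 from by omega) _ (fun j hj => by
      apply gmul_one_sub
      apply gmul_one_sub
      · exact xm _ _ (by omega)
      · exact xp _ _ (by omega)
      · exact xp _ _ (by omega))
  rw [hA, hB]
  exact hC i

lemma gaussPolyT (N t : ℕ) (ht : 1 ≤ t) :
    (Polynomial.X:Polynomial ℤ)^(N+1) ∣ (∏ j ∈ range (2*(N+1)), (1 - Polynomial.X^(t*(j+1))))^2
      - (1 + ∑ k ∈ range (N+1), 2*(-1:Polynomial ℤ)^(k+1) * Polynomial.X^(t*((k+1)^2)))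
        * (∏ j ∈ range (2*(N+1)), (1 - Polynomial.X^(t*(2*(j+1))))) := by
  have h0 := gaussPoly N
  unfold Wd at h0
  have h := map_dvd (Polynomial.expand ℤ t) h0
  simp only [map_sub, map_pow, map_mul, map_add, map_one, map_prod, map_sum, map_neg,
    map_ofNat, Polynomial.expand_X] at h
  simp only [← pow_mul] at h
  exact dvd_trans (pow_dvd_pow _ (by nlinarith : N+1 ≤ t*(N+1))) h

noncomputable def Th (t N : ℕ) : PowerSeries ℤ :=
  1 + ∑ k ∈ range (N+1), 2*(-1:PowerSeries ℤ)^(k+1) * (X:PowerSeries ℤ)^(t*((k+1)^2))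

lemma gaussPS (N t : ℕ) (ht : 1 ≤ t) :
    (X:PowerSeries ℤ)^(N+1) ∣ (∏ j ∈ range (2*(N+1)), (1 - (X:PowerSeries ℤ)^(t*(j+1))))^2
      - Th t N * (∏ j ∈ range (2*(N+1)), (1 - (X:PowerSeries ℤ)^(t*(2*(j+1))))) := by
  have h := map_dvd (Polynomial.coeToPowerSeries.ringHom (R := ℤ)) (gaussPolyT N t ht)
  simp only [map_sub, map_pow, map_mul, map_add, map_one, map_prod, map_sum, map_neg,
    map_ofNat, Polynomial.coeToPowerSeries.ringHom_apply, Polynomial.coe_X] at h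
  exact h

lemma prod_swap_ranges {g : ℕ → ℕ} (hg : ∀ j, j+1 ≤ g j) {M M' N : ℕ}
    (h1 : N+1 ≤ M) (h2 : N+1 ≤ M') :
    (X:PowerSeries ℤ)^(N+1) ∣ (∏ j ∈ range M, (1 - (X:PowerSeries ℤ)^(g j)))
      - ∏ j ∈ range M', (1 - (X:PowerSeries ℤ)^(g j)) := by
  have hA := prod_tail (x := (X:PowerSeries ℤ)^(N+1)) h1
    (fun j => 1 - (X:PowerSeries ℤ)^(g j)) (fun j hj => xm _ _ (by have := hg j; omega))
  have hB := prod_tail (x := (X:PowerSeries ℤ)^(N+1)) h2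
    (fun j => 1 - (X:PowerSeries ℤ)^(g j)) (fun j hj => xm _ _ (by have := hg j; omega))
  have := dvd_sub hA hB
  simpa using this

lemma gaussPA (N t : ℕ) (ht : 1 ≤ t) :
    (X:PowerSeries ℤ)^(N+1) ∣ (PA t N)^2 - Th t N * PA (2*t) N := by
  have h := gaussPS N t ht
  have dA : (X:PowerSeries ℤ)^(N+1) ∣ PA t N
      - ∏ j ∈ range (2*(N+1)), (1 - (X:PowerSeries ℤ)^(t*(j+1))) := by
    unfold PA
    exact prod_swap_ranges (g := fun j => t*(j+1)) (fun j => by nlinarith) (by omega) (by omega)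
  have dW : (X:PowerSeries ℤ)^(N+1) ∣ Th t N * (∏ j ∈ range (2*(N+1)), (1 - (X:PowerSeries ℤ)^(t*(2*(j+1)))))
      - Th t N * PA (2*t) N := by
    have hPA : PA (2*t) N = ∏ j ∈ range (N+1), (1 - (X:PowerSeries ℤ)^(t*(2*(j+1)))) := by
      unfold PA
      exact Finset.prod_congr rfl (fun j _ => by rw [show 2*t*(j+1) = t*(2*(j+1)) from by ring])
    rw [hPA]
    have := prod_swap_ranges (g := fun j => t*(2*(j+1))) (fun j => by nlinarith) (N := N)
      (show N+1 ≤ 2*(N+1) from by omega) (show N+1 ≤ N+1 from le_refl _)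
    have h2 : ∀ (a b c : PowerSeries ℤ), a * b - a * c = (b - c) * a := fun a b c => by ring
    rw [h2]
    exact Dvd.dvd.mul_right this _
  have split : (PA t N)^2 - Th t N * PA (2*t) N
      = (PA t N * PA t N - (∏ j ∈ range (2*(N+1)), (1 - (X:PowerSeries ℤ)^(t*(j+1))))
          * (∏ j ∈ range (2*(N+1)), (1 - (X:PowerSeries ℤ)^(t*(j+1)))))
        + ((∏ j ∈ range (2*(N+1)), (1 - (X:PowerSeries ℤ)^(t*(j+1))))^2
            - Th t N * (∏ j ∈ range (2*(N+1)), (1 - (X:PowerSeries ℤ)^(t*(2*(j+1))))))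
        + (Th t N * (∏ j ∈ range (2*(N+1)), (1 - (X:PowerSeries ℤ)^(t*(2*(j+1)))))
            - Th t N * PA (2*t) N) := by ring
  rw [split]
  exact dvd_add (dvd_add (cmul dA dA) h) dW

lemma tri (M : ℕ) : ∏ j ∈ range M, ((1+(X:PowerSeries ℤ)^(3*j+1)) * (1+(X:PowerSeries ℤ)^(3*j+2)) * (1+(X:PowerSeries ℤ)^(3*j+3)))
    = ∏ j ∈ range (3*M), (1+(X:PowerSeries ℤ)^(j+1)) := by
  induction M with
  | zero => simp
  | succ M ih =>
    rw [Finset.prod_range_succ, ih, show 3*(M+1) = 3*M+1+1+1 from by ring,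
      Finset.prod_range_succ, Finset.prod_range_succ, Finset.prod_range_succ]
    ring

lemma h2x (N : ℕ) : (X:PowerSeries ℤ)^(N+1) ∣ PB1 N * PB2 N * PB3 N - PBf N := by
  have heq : PB1 N * PB2 N * PB3 N
      = ∏ j ∈ range (3*(N+1)), (1+(X:PowerSeries ℤ)^(j+1)) := by
    rw [← tri (N+1)]
    unfold PB1 PB2 PB3
    rw [← Finset.prod_mul_distrib, ← Finset.prod_mul_distrib]
    exact Finset.prod_congr rfl (fun j _ => by rw [show 3*(j+1) = 3*j+3 from by ring])
  rw [heq]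
  unfold PBf
  have hA := prod_tail (x := (X:PowerSeries ℤ)^(N+1)) (show N+1 ≤ 3*(N+1) from by omega)
    (fun j => 1 + (X:PowerSeries ℤ)^(j+1)) (fun j hj => xp _ _ (by omega))
  exact hA

lemma h3x (N : ℕ) : PBf N * PA 1 N = PA 2 N := by
  unfold PBf PA
  rw [← Finset.prod_mul_distrib]
  exact Finset.prod_congr rfl (fun j _ => by ring)

lemma h4x (N : ℕ) : PB3 N * PA 3 N = PA 6 N := by
  unfold PB3 PA
  rw [← Finset.prod_mul_distrib]
  exact Finset.prod_congr rfl (fun j _ => by ring)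

lemma isUnit_PA (t N : ℕ) (ht : 1 ≤ t) : IsUnit (PA t N) := by
  rw [PowerSeries.isUnit_iff_constantCoeff]
  unfold PA
  rw [map_prod]
  have hone : ∀ j ∈ range (N+1), (PowerSeries.constantCoeff (R := ℤ)) (1 - (X:PowerSeries ℤ)^(t*(j+1))) = 1 := by
    intro j _
    rw [map_sub, map_one, map_pow, PowerSeries.constantCoeff_X,
      zero_pow (by nlinarith : t*(j+1) ≠ 0), sub_zero]
  rw [Finset.prod_congr rfl hone, Finset.prod_const_one]
  exact isUnit_one

lemma isUnit_PB3 (N : ℕ) : IsUnit (PB3 N) := by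
  rw [PowerSeries.isUnit_iff_constantCoeff]
  unfold PB3
  rw [map_prod]
  have hone : ∀ j ∈ range (N+1), (PowerSeries.constantCoeff (R := ℤ)) (1 + (X:PowerSeries ℤ)^(3*(j+1))) = 1 := by
    intro j _
    rw [map_add, map_one, map_pow, PowerSeries.constantCoeff_X,
      zero_pow (by omega : 3*(j+1) ≠ 0), add_zero]
  rw [Finset.prod_congr rfl hone, Finset.prod_const_one]
  exact isUnit_one

theorem mainZ (C : ℕ → ℤ)
    (hC : ∀ N : ℕ, PowerSeries.coeff N
      ((PowerSeries.mk fun n => C n) *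
        ∏ n ∈ Finset.range (N + 1), (1 - (PowerSeries.X : PowerSeries ℤ) ^ (n + 1))) =
      PowerSeries.coeff N
      (∏ n ∈ Finset.range (N + 1),
        ((1 - (PowerSeries.X : PowerSeries ℤ) ^ (3 * (n + 1))) *
          (1 + PowerSeries.X ^ (3 * n + 1)) * (1 + PowerSeries.X ^ (3 * n + 2)))))
    (N : ℕ) :
    (X:PowerSeries ℤ)^(N+1) ∣ (PowerSeries.mk fun n => C n) * Th 1 N - Th 3 N := by
  set d : PowerSeries ℤ := (X:PowerSeries ℤ)^(N+1) with hd
  set F : PowerSeries ℤ := PowerSeries.mk fun n => C n with hF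
  have h1 : d ∣ F * PA 1 N - PA 3 N * PB1 N * PB2 N := step1 C hC N
  have hg1 : d ∣ (PA 1 N)^2 - Th 1 N * PA 2 N := by
    have := gaussPA N 1 (le_refl 1)
    rwa [show 2*1 = 2 from rfl] at this
  have hg3 : d ∣ (PA 3 N)^2 - Th 3 N * PA 6 N := by
    have := gaussPA N 3 (by omega)
    rwa [show 2*3 = 6 from rfl] at this
  have s2 : d ∣ PA 1 N - Th 1 N * PBf N := by
    apply ccancel (isUnit_PA 1 N (le_refl 1))
    have hshape : (PA 1 N - Th 1 N * PBf N) * PA 1 N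
        = (PA 1 N)^2 - Th 1 N * (PBf N * PA 1 N) := by ring
    rw [hshape, h3x]
    exact hg1
  have s1 : d ∣ PA 3 N - Th 3 N * PB3 N := by
    apply ccancel (isUnit_PA 3 N (by omega))
    have hshape : (PA 3 N - Th 3 N * PB3 N) * PA 3 N
        = (PA 3 N)^2 - Th 3 N * (PB3 N * PA 3 N) := by ring
    rw [hshape, h4x]
    exact hg3
  have h2 : d ∣ PB1 N * PB2 N * PB3 N - PBf N := h2x N
  -- telescoping
  have t1 : d ∣ (F * PA 1 N) * (Th 1 N * PB3 N) - (PA 3 N * PB1 N * PB2 N) * (Th 1 N * PB3 N) :=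
    cmulr _ h1
  have t2 : d ∣ (PA 3 N * PB1 N * PB2 N) * (Th 1 N * PB3 N) - (PA 3 N * Th 1 N) * PBf N := by
    have := cmulr (PA 3 N * Th 1 N) h2
    have hshape : (PB1 N * PB2 N * PB3 N) * (PA 3 N * Th 1 N) - PBf N * (PA 3 N * Th 1 N)
        = (PA 3 N * PB1 N * PB2 N) * (Th 1 N * PB3 N) - (PA 3 N * Th 1 N) * PBf N := by ring
    rwa [hshape] at this
  have t3 : d ∣ (PA 3 N * Th 1 N) * PBf N - PA 3 N * PA 1 N := by
    have hneg : d ∣ Th 1 N * PBf N - PA 1 N := by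
      have := dvd_neg.2 s2
      rwa [neg_sub] at this
    have := cmulr (PA 3 N) hneg
    have hshape : (Th 1 N * PBf N) * PA 3 N - PA 1 N * PA 3 N
        = (PA 3 N * Th 1 N) * PBf N - PA 3 N * PA 1 N := by ring
    rwa [hshape] at this
  have t4 : d ∣ PA 3 N * PA 1 N - (Th 3 N * PB3 N) * PA 1 N := by
    have := cmulr (PA 1 N) s1
    rwa [show PA 3 N * PA 1 N - Th 3 N * PB3 N * PA 1 N
      = PA 3 N * PA 1 N - (Th 3 N * PB3 N) * PA 1 N from by ring] at this
  have total : d ∣ (F * PA 1 N) * (Th 1 N * PB3 N) - (Th 3 N * PB3 N) * PA 1 N := by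
    have h12 := dvd_add t1 t2
    have h123 := dvd_add h12 t3
    have h1234 := dvd_add h123 t4
    have hshape : ((F * PA 1 N) * (Th 1 N * PB3 N) - (PA 3 N * PB1 N * PB2 N) * (Th 1 N * PB3 N))
        + ((PA 3 N * PB1 N * PB2 N) * (Th 1 N * PB3 N) - (PA 3 N * Th 1 N) * PBf N)
        + ((PA 3 N * Th 1 N) * PBf N - PA 3 N * PA 1 N)
        + (PA 3 N * PA 1 N - (Th 3 N * PB3 N) * PA 1 N)
        = (F * PA 1 N) * (Th 1 N * PB3 N) - (Th 3 N * PB3 N) * PA 1 N := by ring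
    rwa [hshape] at h1234
  apply ccancel (IsUnit.mul (isUnit_PA 1 N (le_refl 1)) (isUnit_PB3 N))
  have hshape : (F * Th 1 N - Th 3 N) * (PA 1 N * PB3 N)
      = (F * PA 1 N) * (Th 1 N * PB3 N) - (Th 3 N * PB3 N) * PA 1 N := by ring
  rw [hshape]
  exact total

end Series

lemma sqmod3 (x : ℕ) : x^2 % 3 = 0 ∨ x^2 % 3 = 1 := by
  have h := Nat.pow_mod x 2 3
  have h3 : x % 3 = 0 ∨ x % 3 = 1 ∨ x % 3 = 2 := by omega
  rcases h3 with h' | h' | h' <;> rw [h'] at h <;> norm_num at h <;> omega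

lemma sqpar (x : ℕ) : x^2 % 2 = x % 2 := by
  have h := Nat.pow_mod x 2 2
  have h2 : x % 2 = 0 ∨ x % 2 = 1 := by omega
  rcases h2 with h' | h' <;> rw [h'] at h <;> norm_num at h <;> omega

lemma oddsq_mod8 (x : ℕ) (hx : x % 2 = 1) : x^2 % 8 = 1 := by
  have h := Nat.pow_mod x 2 8
  have h2 : x % 8 % 2 = x % 2 := Nat.mod_mod_of_dvd x (by norm_num)
  have h3 : x % 8 < 8 := Nat.mod_lt _ (by omega)
  have h8 : x % 8 = 1 ∨ x % 8 = 3 ∨ x % 8 = 5 ∨ x % 8 = 7 := by omega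
  rcases h8 with h' | h' | h' | h' <;> rw [h'] at h <;> norm_num at h <;> omega

lemma Lsq : ∀ j m x : ℕ, 2^j * (6*m+5) ≠ x^2 := by
  intro j
  induction j using Nat.strong_induction_on with
  | _ j ih =>
    intro m x h
    match j with
    | 0 =>
      rw [pow_zero, one_mul] at h
      rcases sqmod3 x with h1 | h1 <;> omega
    | 1 =>
      rw [pow_one] at h
      rcases (by omega : x % 2 = 0 ∨ x % 2 = 1) with hp | hp
      · obtain ⟨y, hy⟩ : ∃ y, x = 2*y := ⟨x/2, by omega⟩
        have h3 : x^2 = 4*y^2 := by rw [hy]; ring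
        omega
      · have h2 := oddsq_mod8 x hp
        omega
    | (j+2) =>
      have hx : x % 2 = 0 := by
        by_contra hodd
        have h1 : x % 2 = 1 := by omega
        have h2 := oddsq_mod8 x h1
        have h3 : x^2 = 4*(2^j*(6*m+5)) := by rw [← h]; ring
        omega
      obtain ⟨y, hy⟩ : ∃ y, x = 2*y := ⟨x/2, by omega⟩
      apply ih j (by omega) m y
      have h3 : x^2 = 4*y^2 := by rw [hy]; ring
      have h4 : 2^(j+2)*(6*m+5) = 4*(2^j*(6*m+5)) := by ring
      omega

lemma L3form : ∀ j m x y : ℕ, 1 ≤ x → 1 ≤ y → x^2 + 3*y^2 ≠ 2^j * (6*m+5) := by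
  intro j
  induction j using Nat.strong_induction_on with
  | _ j ih =>
    intro m x y hx hy h
    match j with
    | 0 =>
      rw [pow_zero, one_mul] at h
      rcases sqmod3 x with h1 | h1 <;> rcases sqmod3 y with h2 | h2 <;> omega
    | (j+1) =>
      have hev : 2^(j+1)*(6*m+5) = 2*(2^j*(6*m+5)) := by ring
      have hpar : x % 2 = y % 2 := by
        have e1 := sqpar x
        have e2 := sqpar y
        omega
      rcases (by omega : x % 2 = 0 ∨ x % 2 = 1) with hp | hp
      · obtain ⟨a, ha⟩ : ∃ a, x = 2*a := ⟨x/2, by omega⟩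
        obtain ⟨b, hb⟩ : ∃ b, y = 2*b := ⟨y/2, by omega⟩
        have h4 : x^2 + 3*y^2 = 4*(a^2+3*b^2) := by rw [ha, hb]; ring
        match j with
        | 0 =>
          have h5 : 2^(0+1)*(6*m+5) = 2*(6*m+5) := by ring
          omega
        | (j'+1) =>
          apply ih j' (by omega) m a b (by omega) (by omega)
          have h5 : 2^(j'+1+1)*(6*m+5) = 4*(2^(j')*(6*m+5)) := by ring
          omega
      · have hyp : y % 2 = 1 := by omega
        have hx8 := oddsq_mod8 x hp
        have hy8 := oddsq_mod8 y hyp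
        match j with
        | 0 =>
          have h5 : 2^(0+1)*(6*m+5) = 12*m+10 := by ring
          omega
        | 1 =>
          have h4 : 2^(1+1)*(6*m+5) = 24*m+20 := by ring
          rcases sqmod3 x with h1 | h1 <;> rcases sqmod3 y with h2 | h2 <;> omega
        | (j'+2) =>
          have h8 : 2^(j'+2+1)*(6*m+5) = 8*(2^(j')*(6*m+5)) := by ring
          omega

lemma not_three_dvd (k m : ℕ) : ¬ (3 ∣ 2^k*(6*m+5)) := by
  intro h
  have h3 : Nat.Prime 3 := by norm_num
  rcases (Nat.Prime.dvd_mul h3).1 h with h' | h'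
  · have := Nat.Prime.dvd_of_dvd_pow h3 h'
    omega
  · omega

section Final
open PowerSeries

noncomputable def SZp (t N : ℕ) : PowerSeries ℤ :=
  ∑ k ∈ range (N+1), (-1:PowerSeries ℤ)^(k+1) * (X:PowerSeries ℤ)^(t*((k+1)^2))

lemma Th_eq (t N : ℕ) : Th t N = 1 + 2 * SZp t N := by
  unfold Th SZp
  rw [Finset.mul_sum]
  congr 1
  exact Finset.sum_congr rfl (fun k _ => by ring)

lemma neg_pow_C (k : ℕ) : ((-1:PowerSeries ℤ))^(k+1) = PowerSeries.C ((-1)^(k+1)) := by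
  rw [map_pow, map_neg, map_one]

lemma coeff_SZp_eq_zero {t N i : ℕ} (h : ∀ x, 1 ≤ x → t*x^2 ≠ i) :
    PowerSeries.coeff i (SZp t N) = 0 := by
  unfold SZp
  rw [map_sum]
  apply Finset.sum_eq_zero
  intro k _
  rw [neg_pow_C, PowerSeries.coeff_C_mul, PowerSeries.coeff_X_pow,
    if_neg (fun hh => h (k+1) (by omega) hh.symm), mul_zero]

lemma coeff_SZp_ne {t N a : ℕ} (h : PowerSeries.coeff a (SZp t N) ≠ 0) :
    ∃ x, 1 ≤ x ∧ t*x^2 = a := by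
  by_contra hc
  push_neg at hc
  exact h (coeff_SZp_eq_zero (fun x hx => hc x hx))

end Final

end C31

open C31 Finset in
/-- For all `k, m ≥ 0`, `C̄₃₁(2^k (6m + 5)) ≡ 0 (mod 8)`. -/
theorem C31_two_pow_mod_eight (C : ℕ → ℤ)
    (hC : ∀ N : ℕ, PowerSeries.coeff N
      ((PowerSeries.mk fun n => C n) *
        ∏ n ∈ Finset.range (N + 1), (1 - (PowerSeries.X : PowerSeries ℤ) ^ (n + 1))) =
      PowerSeries.coeff N
      (∏ n ∈ Finset.range (N + 1),
        ((1 - (PowerSeries.X : PowerSeries ℤ) ^ (3 * (n + 1))) *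
          (1 + PowerSeries.X ^ (3 * n + 1)) * (1 + PowerSeries.X ^ (3 * n + 2)))))
    (k m : ℕ) :
    C (2 ^ k * (6 * m + 5)) ≡ 0 [ZMOD 8] := by
  set N := 2^k * (6*m+5) with hN
  have h2k : 1 ≤ 2^k := Nat.one_le_two_pow
  have hge : 5 ≤ N := by
    have h5 : 1*(6*m+5) ≤ 2^k*(6*m+5) := Nat.mul_le_mul_right _ h2k
    rw [hN]; omega
  have hmain := mainZ C hC N
  set μ : PowerSeries ℤ →+* PowerSeries (ZMod 8) :=
    PowerSeries.map (Int.castRingHom (ZMod 8)) with hμ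
  have hmap := map_dvd μ hmain
  rw [map_pow, map_sub, map_mul, PowerSeries.map_X] at hmap
  set S1 : PowerSeries ℤ := SZp 1 N with hS1
  set S3 : PowerSeries ℤ := SZp 3 N with hS3
  set VZ : PowerSeries ℤ := (1 + 2*S3) * (1 - 2*S1 + 4*S1^2) with hVZ
  have hTh1 : Th 1 N = 1 + 2*S1 := Th_eq 1 N
  have hTh3 : Th 3 N = 1 + 2*S3 := Th_eq 3 N
  have hkey : VZ * Th 1 N = Th 3 N + 8*((1+2*S3)*S1^3) := by
    rw [hTh1, hTh3, hVZ]; ring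
  have h8 : (8 : PowerSeries (ZMod 8)) = 0 := by
    calc (8 : PowerSeries (ZMod 8)) = (PowerSeries.C (R := ZMod 8)) 8 :=
          (map_ofNat ((PowerSeries.C (R := ZMod 8))) 8).symm
      _ = 0 := by rw [show (8 : ZMod 8) = 0 from rfl, map_zero]
  have m8 : μ (8:PowerSeries ℤ) = 8 := map_ofNat μ 8
  have hVT : μ VZ * μ (Th 1 N) = μ (Th 3 N) := by
    rw [← map_mul, hkey, map_add, map_mul, m8, h8, zero_mul, add_zero]
  have hUnit : IsUnit (μ (Th 1 N)) := by
    apply IsUnit.of_mul_eq_one (μ (1 - 2*S1 + 4*S1^2))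
    rw [← map_mul]
    have hh : Th 1 N * (1 - 2*S1 + 4*S1^2) = 1 + 8*S1^3 := by rw [hTh1]; ring
    rw [hh, map_add, map_mul, m8, h8, zero_mul, add_zero, map_one]
  have hdvd2 : (PowerSeries.X:PowerSeries (ZMod 8))^(N+1)
      ∣ μ (PowerSeries.mk fun n => C n) - μ VZ := by
    apply ccancel hUnit
    have hshape : (μ (PowerSeries.mk fun n => C n) - μ VZ) * μ (Th 1 N)
        = (μ (PowerSeries.mk fun n => C n) * μ (Th 1 N) - μ (Th 3 N))
          + (μ (Th 3 N) - μ VZ * μ (Th 1 N)) := by ring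
    rw [hshape, hVT, sub_self, add_zero]
    exact hmap
  have hcoeff := coeff_of_dvd hdvd2 (show N < N+1 from by omega)
  have hF : PowerSeries.coeff N (μ (PowerSeries.mk fun n => C n))
      = ((C N : ℤ) : ZMod 8) := by
    rw [hμ, PowerSeries.coeff_map, PowerSeries.coeff_mk]
    rfl
  -- coefficient facts over ℤ
  have hs1 : PowerSeries.coeff N S1 = 0 := by
    apply coeff_SZp_eq_zero
    intro x hx hcon
    exact Lsq k m x (by omega)
  have hs3 : PowerSeries.coeff N S3 = 0 := by
    apply coeff_SZp_eq_zero
    intro x hx hcon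
    exact not_three_dvd k m ⟨x^2, by omega⟩
  have hcross : PowerSeries.coeff N (S3*S1) = 0 := by
    rw [PowerSeries.coeff_mul]
    apply Finset.sum_eq_zero
    intro p hp
    have hsum : p.1 + p.2 = N := Finset.HasAntidiagonal.mem_antidiagonal.1 hp
    by_contra hne
    have h1 : PowerSeries.coeff p.1 S3 ≠ 0 := fun hz => hne (by rw [hz, zero_mul])
    have h2 : PowerSeries.coeff p.2 S1 ≠ 0 := fun hz => hne (by rw [hz, mul_zero])
    obtain ⟨y, hy1, hy2⟩ := coeff_SZp_ne h1
    obtain ⟨x, hx1, hx2⟩ := coeff_SZp_ne h2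
    exact L3form k m x y hx1 hy1 (by omega)
  have heven : (2:ℤ) ∣ PowerSeries.coeff N (S1^2) := by
    have hcast : (Int.castRingHom (ZMod 2)) (PowerSeries.coeff N (S1^2)) = 0 := by
      rw [pow_two, PowerSeries.coeff_mul, map_sum]
      apply Finset.sum_involution (g := fun p _ => (p.2, p.1))
      · intro p hp
        have hcomm : (Int.castRingHom (ZMod 2)) (PowerSeries.coeff p.2 S1 * PowerSeries.coeff p.1 S1)
            = (Int.castRingHom (ZMod 2)) (PowerSeries.coeff p.1 S1 * PowerSeries.coeff p.2 S1) := by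
          rw [mul_comm]
        rw [hcomm]
        exact CharTwo.add_self_eq_zero _
      · intro p hp hne hswap
        apply hne
        have hpp : p.1 = p.2 := by
          have := congrArg Prod.fst hswap
          simpa using this.symm
        have hsum : p.1 + p.2 = N := Finset.HasAntidiagonal.mem_antidiagonal.1 hp
        have hz : PowerSeries.coeff p.1 S1 = 0 := by
          apply coeff_SZp_eq_zero
          intro x hx hcon
          have hNN : N = 2*x^2 := by omega
          have h2N : 2^(k+1) * (6*m+5) = (2*x)^2 := by
            have hee : 2^(k+1)*(6*m+5) = 2*(2^k*(6*m+5)) := by ring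
            rw [hee, ← hN, hNN]; ring
          exact Lsq (k+1) m (2*x) h2N
        rw [hz, zero_mul, map_zero]
      · intro p hp
        rw [Finset.HasAntidiagonal.mem_antidiagonal] at hp ⊢
        omega
      · intro p hp
        rfl
    have hcast' : ((PowerSeries.coeff N (S1^2) : ℤ) : ZMod 2) = 0 := hcast
    have h2' := (ZMod.intCast_zmod_eq_zero_iff_dvd _ 2).1 hcast'
    exact_mod_cast h2' 
  obtain ⟨w, hw⟩ := heven
  have hVZexp : VZ = 1 - 2*S1 + 4*S1^2 + 2*S3 - 4*(S3*S1) + 8*(S3*S1^2) := by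
    rw [hVZ]; ring
  have c2 : (2:PowerSeries ℤ) = PowerSeries.C 2 := (map_ofNat _ 2).symm
  have c4 : (4:PowerSeries ℤ) = PowerSeries.C 4 := (map_ofNat _ 4).symm
  have c8 : (8:PowerSeries ℤ) = PowerSeries.C 8 := (map_ofNat _ 8).symm
  have hVZcoeff : PowerSeries.coeff N VZ = 8*(w + PowerSeries.coeff N (S3*S1^2)) := by
    rw [hVZexp, c2, c4, c8]
    simp only [map_add, map_sub, PowerSeries.coeff_C_mul]
    rw [hs1, hs3, hcross, hw, PowerSeries.coeff_one, if_neg (by omega : ¬ N = 0)]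
    ring
  have hV8 : PowerSeries.coeff N (μ VZ) = 0 := by
    rw [hμ, PowerSeries.coeff_map, hVZcoeff, map_mul]
    have h80 : (Int.castRingHom (ZMod 8)) (8:ℤ) = 0 := by decide
    rw [h80, zero_mul]
  have hzero : ((C N : ℤ) : ZMod 8) = 0 := by
    rw [← hF, hcoeff, hV8]
  have hdvd8 : (8:ℤ) ∣ C N := by
    have := (ZMod.intCast_zmod_eq_zero_iff_dvd (C N) 8).1 hzero
    exact_mod_cast this
  exact Int.modEq_zero_iff_dvd.2 hdvd8
end
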